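/- arXiv:1107.0393 — 6 statements merged into one kernel-verified Lean document; each statement's English description precedes it below -/
import Mathlib

section
/- Let K be a compact subset of ℂ such that (ℂ ∪ {∞}) \ K is connected, and let U ⊆ ℂ be an open set containing K. Then there exists a simply connected open set V with K ⊆ V ⊆ U. -/
open Topology Filter Set

noncomputable section

/-- The complement of (the image of) `V ⊆ ℂ` in the Riemann sphere `ℂ ∪ {∞}`. -/
def sphereCompl (V : Set ℂ) : Set (OnePoint ℂ) := (OnePoint.some '' V)ᶜ

/-- The complement `(Ω ∪ {α}) \ F` in the one point compactification of `Ω`. -/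
def ocCompl (Ω F : Set ℂ) : Set (OnePoint Ω) :=
  (OnePoint.some '' {x : Ω | (x : ℂ) ∈ F})ᶜ

/-- `S` is locally connected at the point `a`. -/
def LocConnAt {X : Type*} [TopologicalSpace X] (S : Set X) (a : X) : Prop :=
  ∀ U ∈ 𝓝 a, ∃ W ∈ 𝓝 a, W ⊆ U ∧ IsConnected (W ∩ S)

/-- `F` is a relatively closed subset of `Ω`. -/
def RelClosed (Ω F : Set ℂ) : Prop :=
  F ⊆ Ω ∧ IsClosed ((fun x : Ω => (x : ℂ)) ⁻¹' F)

/-- `B` is a hole of `E` in `Ω`: a connected component of `Ω \ E` contained in a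
compact subset of `Ω`. -/
def IsHole (Ω E B : Set ℂ) : Prop :=
  (∃ x ∈ Ω \ E, B = connectedComponentIn (Ω \ E) x) ∧
  ∃ K : Set ℂ, IsCompact K ∧ K ⊆ Ω ∧ B ⊆ K

/-- The union of all holes of `E` in `Ω`. -/
def holesUnion (Ω E : Set ℂ) : Set ℂ := ⋃₀ {B | IsHole Ω E B}

/-- `F` is an Arakelian set in `Ω`: relatively closed, with `(Ω ∪ {α}) \ F`
connected and locally connected at `α`. -/
def ArakelianIn (Ω F : Set ℂ) : Prop :=
  RelClosed Ω F ∧ IsConnected (ocCompl Ω F) ∧ LocConnAt (ocCompl Ω F) OnePoint.infty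

theorem annulus_conn (R : ℝ) (hR : 0 < R) : IsConnected {z : ℂ | R ≤ ‖z‖} := by
  have h1 : IsConnected ((Ici R) ×ˢ (Metric.sphere (0:ℂ) 1)) :=
    (isConnected_Ici).prod (isConnected_sphere (by simp [Complex.rank_real_complex]) 0 zero_le_one)
  have h2 : IsConnected ((fun p : ℝ × ℂ => p.1 • p.2) '' ((Ici R) ×ˢ (Metric.sphere (0:ℂ) 1))) :=
    h1.image _ (continuous_fst.smul continuous_snd).continuousOn
  convert h2 using 1
  ext z
  simp only [mem_setOf_eq, mem_image, mem_prod, Metric.mem_sphere, dist_zero_right, mem_Ici]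
  constructor
  · intro hz
    have hz0 : z ≠ 0 := by
      intro h; rw [h] at hz; simp at hz; linarith
    refine ⟨⟨‖z‖, ‖z‖⁻¹ • z⟩, ⟨hz, ?_⟩, ?_⟩
    · simp [norm_smul]; exact inv_mul_cancel₀ (by simpa using hz0)
    · rw [smul_smul, mul_inv_cancel₀ (norm_ne_zero_iff.2 hz0), one_smul]
  · rintro ⟨⟨r, u⟩, ⟨hr, hu⟩, rfl⟩
    simp only [norm_smul, hu, mul_one, Real.norm_eq_abs]
    rwa [abs_of_nonneg (le_trans hR.le hr)]

theorem comp_unbounded (K : Set ℂ) (hK : IsCompact K) (hKc : IsConnected (sphereCompl K))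
    (c : ℂ) (hc : c ∉ K) : ¬ Bornology.IsBounded (connectedComponentIn Kᶜ c) := by
  intro hb
  set C := connectedComponentIn Kᶜ c with hC
  have hcC : c ∈ C := mem_connectedComponentIn hc
  have hCopen : IsOpen C := hK.isClosed.isOpen_compl.connectedComponentIn
  have hCsub : C ⊆ Kᶜ := connectedComponentIn_subset _ _
  have hclK : closure C ∩ Kᶜ ⊆ C := by
    have hconn : IsPreconnected (closure C ∩ Kᶜ) := by
      apply IsPreconnected.subset_closure (s := C)
        (isPreconnected_connectedComponentIn)
      · exact subset_inter subset_closure hCsub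
      · exact inter_subset_left.trans subset_rfl
    exact hconn.subset_connectedComponentIn ⟨subset_closure hcC, hc⟩ inter_subset_right
  have hclcpt : IsCompact (closure C) := Metric.isCompact_of_isClosed_isBounded isClosed_closure hb.closure
  -- two open sets in the sphere
  set O₁ : Set (OnePoint ℂ) := OnePoint.some '' C with hO₁
  set O₂ : Set (OnePoint ℂ) := (OnePoint.some '' closure C)ᶜ with hO₂
  have hO₁o : IsOpen O₁ := OnePoint.isOpen_image_coe.2 hCopen
  have hO₂o : IsOpen O₂ := OnePoint.isOpen_compl_image_coe.2 ⟨isClosed_closure, hclcpt⟩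
  have hcover : sphereCompl K ⊆ O₁ ∪ O₂ := by
    rintro x hx
    induction x using OnePoint.rec with
    | infty => exact Or.inr (by simpa [O₂] using OnePoint.infty_notMem_image_coe)
    | coe z =>
      have hz : z ∉ K := by
        intro h; exact hx (mem_image_of_mem _ h)
      by_cases hzc : (z : OnePoint ℂ) ∈ O₂
      · exact Or.inr hzc
      · left
        simp only [O₂, mem_compl_iff, not_not] at hzc
        obtain ⟨w, hw, hwz⟩ := hzc
        have := OnePoint.coe_injective hwz
        subst this
        exact mem_image_of_mem _ (hclK ⟨hw, hz⟩)
  have h1 : (sphereCompl K ∩ O₁).Nonempty := by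
    refine ⟨(c : OnePoint ℂ), ?_, mem_image_of_mem _ hcC⟩
    intro h
    obtain ⟨w, hw, hwc⟩ := h
    exact hc (OnePoint.coe_injective hwc ▸ hw)
  have h2 : (sphereCompl K ∩ O₂).Nonempty := by
    refine ⟨OnePoint.infty, ?_, by simpa [O₂] using OnePoint.infty_notMem_image_coe⟩
    exact fun h => OnePoint.infty_notMem_image_coe h
  obtain ⟨x, -, hx1, hx2⟩ := hKc.isPreconnected O₁ O₂ hO₁o hO₂o hcover h1 h2
  obtain ⟨w, hw, rfl⟩ := hx1
  exact hx2 (mem_image_of_mem _ (subset_closure hw))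

theorem stmt0 (K U : Set ℂ) (hK : IsCompact K) (hKc : IsConnected (sphereCompl K))
    (hU : IsOpen U) (hKU : K ⊆ U) :
    ∃ V : Set ℂ, IsOpen V ∧ IsConnected (sphereCompl V) ∧ K ⊆ V ∧ V ⊆ U := by
  obtain ⟨δ, hδ0, hδ⟩ := hK.exists_thickening_subset_open hU hKU
  obtain ⟨r, hr⟩ := hK.isBounded.subset_closedBall 0
  set R : ℝ := max r 0 + 1 with hR
  have hR0 : 0 < R := by positivity
  have hKR : ∀ z ∈ K, ‖z‖ < R := by
    intro z hz
    have := hr hz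
    simp only [Metric.mem_closedBall, dist_zero_right] at this
    calc ‖z‖ ≤ r := this
      _ < R := by simp [hR]; linarith [le_max_left r 0]
  set Ann : Set ℂ := {z | R ≤ ‖z‖} with hAnn
  have hAnnConn : IsConnected Ann := annulus_conn R hR0
  have hAnnClosed : IsClosed Ann := isClosed_le continuous_const continuous_norm
  have hAnnK : Ann ⊆ Kᶜ := fun z hz hzK => absurd (hKR z hzK) (not_lt.2 hz)
  have hUK : Uᶜ ⊆ Kᶜ := compl_subset_compl.2 hKU
  have hball : ∀ x ∈ Uᶜ, Metric.closedBall x (δ/2) ⊆ Kᶜ := by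
    intro x hx z hz hzK
    apply hx
    apply hδ
    rw [Metric.mem_thickening_iff]
    refine ⟨z, hzK, ?_⟩
    have : dist x z ≤ δ/2 := by rwa [Metric.mem_closedBall, dist_comm] at hz
    linarith
  set A : Set ℂ := Uᶜ ∩ Metric.closedBall 0 R with hA
  have hAcpt : IsCompact A := (isCompact_closedBall 0 R).inter_left hU.isClosed_compl
  obtain ⟨t, htA, htfin, htcov⟩ :=
    hAcpt.elim_finite_subcover_image (b := A) (c := fun x => Metric.ball x (δ/2))
      (fun x _ => Metric.isOpen_ball)
      (fun z hz => mem_iUnion₂.2 ⟨z, hz, Metric.mem_ball_self (by linarith)⟩)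
  have hQ : ∀ x ∈ t, ∃ Q : Set ℂ, IsCompact Q ∧ IsPreconnected Q ∧ Q ⊆ Kᶜ ∧
      (Q ∩ Ann).Nonempty ∧ Metric.ball x (δ/2) ⊆ Q := by
    intro x hx
    have hxU : x ∈ Uᶜ := (htA hx).1
    have hxK : x ∉ K := hUK hxU
    have hunb := comp_unbounded K hK hKc x hxK
    rw [isBounded_iff_forall_norm_le] at hunb
    push_neg at hunb
    obtain ⟨p, hp, hpR⟩ := hunb R
    set C := connectedComponentIn Kᶜ x with hC
    have hCopen : IsOpen C := hK.isClosed.isOpen_compl.connectedComponentIn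
    have hCconn : IsConnected C := isConnected_connectedComponentIn_iff.2 hxK
    have hxC : x ∈ C := mem_connectedComponentIn hxK
    have hCpath : IsPathConnected C := hCopen.isConnected_iff_isPathConnected.1 hCconn
    obtain ⟨γ, hγ⟩ := hCpath.joinedIn x hxC p hp
    refine ⟨Metric.closedBall x (δ/2) ∪ range γ, ?_, ?_, ?_, ?_, ?_⟩
    · exact (isCompact_closedBall _ _).union (isCompact_range γ.continuous)
    · refine IsPreconnected.union x (Metric.mem_closedBall_self (by linarith)) ⟨0, γ.source⟩
        (convex_closedBall _ _).isPreconnected (isPreconnected_range γ.continuous)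
    · refine union_subset (hball x hxU) ?_
      rintro - ⟨s, rfl⟩
      exact connectedComponentIn_subset _ _ (hγ s)
    · exact ⟨p, Or.inr ⟨1, γ.target⟩, hpR.le⟩
    · exact (Metric.ball_subset_closedBall).trans subset_union_left
  choose! Q hQc hQconn hQK hQAnn hQball using hQ
  set S : Set ℂ := Ann ∪ ⋃ x ∈ t, Q x with hS
  have hSclosed : IsClosed S := by
    refine hAnnClosed.union ?_
    exact htfin.isClosed_biUnion fun x hx => (hQc x hx).isClosed
  have hSK : S ⊆ Kᶜ := by
    refine union_subset hAnnK ?_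
    exact iUnion₂_subset fun x hx => hQK x hx
  have hUS : Uᶜ ⊆ S := by
    intro z hz
    rcases le_or_gt R ‖z‖ with h | h
    · exact Or.inl h
    · have hzA : z ∈ A := ⟨hz, Metric.mem_closedBall.2 (by rw [dist_zero_right]; linarith)⟩
      obtain ⟨x, hxmem⟩ := mem_iUnion₂.1 (htcov hzA)
      obtain ⟨hxt, hzball⟩ := hxmem
      exact Or.inr (mem_iUnion₂.2 ⟨x, hxt, hQball x hxt hzball⟩)
  have hRAnn : (R : ℂ) ∈ Ann := by simp [hAnn, Complex.norm_real, abs_of_pos hR0]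
  have hSconn : IsPreconnected S := by
    apply isPreconnected_of_forall (R : ℂ)
    intro y hy
    rcases hy with hy | hy
    · exact ⟨Ann, subset_union_left, hRAnn, hy, hAnnConn.isPreconnected⟩
    · obtain ⟨x, hxt, hyQ⟩ := mem_iUnion₂.1 hy
      obtain ⟨q, hqQ, hqAnn⟩ := hQAnn x hxt
      refine ⟨Ann ∪ Q x, ?_, Or.inl hRAnn, Or.inr hyQ, ?_⟩
      · exact union_subset subset_union_left
          (fun w hw => Or.inr (mem_iUnion₂.2 ⟨x, hxt, hw⟩))
      · exact IsPreconnected.union q hqAnn hqQ hAnnConn.isPreconnected (hQconn x hxt)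
  refine ⟨Sᶜ, hSclosed.isOpen_compl, ?_, ?_, ?_⟩
  · -- sphereCompl Sᶜ = insert ∞ (coe '' S), connected
    have heq : sphereCompl Sᶜ = insert OnePoint.infty (OnePoint.some '' S) := by
      ext x
      induction x using OnePoint.rec with
      | infty =>
        constructor
        · intro _; exact mem_insert _ _
        · intro _; exact OnePoint.infty_notMem_image_coe
      | coe z =>
        simp only [sphereCompl, mem_compl_iff, mem_insert_iff]
        constructor
        · intro h
          right
          refine mem_image_of_mem _ ?_
          by_contra hzS
          exact h (mem_image_of_mem _ hzS)
        · rintro (h | ⟨w, hw, hwz⟩) hmem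
          · exact OnePoint.coe_ne_infty z h
          · obtain ⟨v, hv, hvz⟩ := hmem
            have := OnePoint.coe_injective hvz
            subst this
            have := OnePoint.coe_injective hwz
            subst this
            exact hv hw
    rw [heq]
    have himg : IsConnected (OnePoint.some '' S) :=
      (IsConnected.image ⟨⟨(R:ℂ), Or.inl hRAnn⟩, hSconn⟩ _ OnePoint.continuous_coe.continuousOn)
    refine himg.subset_closure (subset_insert _ _) ?_
    intro x hx
    rcases hx with rfl | hx
    · -- ∞ ∈ closure
      rw [mem_closure_iff_nhds]
      intro N hN
      obtain ⟨s, ⟨hscl, hscpt⟩, hsN⟩ := (OnePoint.hasBasis_nhds_infty).mem_iff.1 hN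
      obtain ⟨ρ, hρ⟩ := hscpt.isBounded.subset_closedBall 0
      set z : ℂ := (((max R ρ) + 1 : ℝ) : ℂ) with hzdef
      have hzn : ‖z‖ = max R ρ + 1 := by
        rw [hzdef, Complex.norm_real, Real.norm_eq_abs, abs_of_pos (by positivity)]
      have hzAnn : z ∈ Ann := by
        simp only [hAnn, mem_setOf_eq, hzn]
        linarith [le_max_left R ρ]
      have hzs : z ∉ s := by
        intro h
        have := hρ h
        simp only [Metric.mem_closedBall, dist_zero_right, hzn] at this
        linarith [le_max_right R ρ]
      refine ⟨(z : OnePoint ℂ), hsN (Or.inl (mem_image_of_mem _ hzs)), mem_image_of_mem _ (Or.inl hzAnn)⟩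
    · exact subset_closure hx
  · intro z hz
    exact fun hzS => hSK hzS hz
  · intro z hz
    by_contra hzU
    exact hz (hUS hzU)
end
end

section
/- Let F = ⋃_{n=1}^∞ [({∑_{i=1}^n 2^{-i}} × [0,n]) ∪ ([∑_{i=1}^n 2^{-i}, ∑_{i=1}^{n+1} 2^{-i}] × {n})] ∪ ({1} × [0,∞)) ⊆ ℝ² ≅ ℂ. Then F is closed in ℂ, (ℂ ∪ {∞}) \ F is connected, but there exists an open set U ⊇ F such that no simply connected open set V satisfies F ⊆ V ⊆ U. -/
open Topology Filter Set

noncomputable section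

/-- `∑_{i=1}^n 2^{-i}` -/
def s1 (n : ℕ) : ℝ := ∑ i ∈ Finset.Icc 1 n, ((2:ℝ))⁻¹ ^ i

def Fset : Set ℂ :=
  (⋃ n ∈ {n : ℕ | 1 ≤ n},
    ({z : ℂ | z.re = s1 n ∧ z.im ∈ Set.Icc (0:ℝ) (n:ℝ)} ∪
     {z : ℂ | z.re ∈ Set.Icc (s1 n) (s1 (n+1)) ∧ z.im = (n:ℝ)}))
  ∪ {z : ℂ | z.re = 1 ∧ 0 ≤ z.im}

lemma s1_eq (n : ℕ) : s1 n = 1 - (2:ℝ)⁻¹ ^ n := by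
  induction n with
  | zero => simp [s1]
  | succ k ih =>
    rw [s1, Finset.sum_Icc_succ_top (by omega : 1 ≤ k + 1), ← s1, ih, pow_succ]
    ring

lemma s1_strictMono : StrictMono s1 := by
  intro m n h
  rw [s1_eq, s1_eq, sub_lt_sub_iff_left]
  exact pow_lt_pow_right_of_lt_one₀ (by norm_num) (by norm_num) h

lemma s1_mono : Monotone s1 := s1_strictMono.monotone

lemma s1_lt_one (n : ℕ) : s1 n < 1 := by
  rw [s1_eq]
  have : (0:ℝ) < 2⁻¹ ^ n := by positivity
  linarith

lemma s1_one : s1 1 = 2⁻¹ := by rw [s1_eq]; norm_num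

lemma half_le_s1 {n : ℕ} (h : 1 ≤ n) : 2⁻¹ ≤ s1 n := s1_one ▸ s1_mono h

lemma mem_Fset {z : ℂ} : z ∈ Fset ↔
    (∃ n : ℕ, 1 ≤ n ∧ ((z.re = s1 n ∧ z.im ∈ Set.Icc (0:ℝ) (n:ℝ)) ∨
      (z.re ∈ Set.Icc (s1 n) (s1 (n+1)) ∧ z.im = (n:ℝ)))) ∨ (z.re = 1 ∧ 0 ≤ z.im) := by
  simp only [Fset, Set.mem_union, Set.mem_iUnion, Set.mem_setOf_eq, exists_prop]

lemma Fset_im_nonneg {w : ℂ} (hw : w ∈ Fset) : 0 ≤ w.im := by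
  rcases mem_Fset.mp hw with ⟨n, hn, ⟨-, h⟩ | ⟨-, h⟩⟩ | ⟨-, h⟩
  · exact h.1
  · rw [h]; positivity
  · exact h

lemma Fset_re_le_one {w : ℂ} (hw : w ∈ Fset) : w.re ≤ 1 := by
  rcases mem_Fset.mp hw with ⟨n, hn, ⟨h, -⟩ | ⟨h, -⟩⟩ | ⟨h, -⟩
  · rw [h]; exact (s1_lt_one n).le
  · exact h.2.trans (s1_lt_one (n+1)).le
  · exact h.le

lemma half_le_Fset_re {w : ℂ} (hw : w ∈ Fset) : 2⁻¹ ≤ w.re := by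
  rcases mem_Fset.mp hw with ⟨n, hn, ⟨h, -⟩ | ⟨h, -⟩⟩ | ⟨h, -⟩
  · rw [h]; exact half_le_s1 hn
  · exact (half_le_s1 hn).trans h.1
  · rw [h]; norm_num

lemma isClosed_Fset : IsClosed Fset := by
  apply isClosed_of_closure_subset
  intro z hz
  have hle : z.re ≤ 1 :=
    closure_minimal (fun w hw => Fset_re_le_one hw)
      (isClosed_le Complex.continuous_re continuous_const) hz
  have him : 0 ≤ z.im :=
    closure_minimal (fun w hw => Fset_im_nonneg hw)
      (isClosed_le continuous_const Complex.continuous_im) hz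
  rcases eq_or_lt_of_le hle with h1 | h1
  · exact mem_Fset.mpr (Or.inr ⟨h1, him⟩)
  · set c := (z.re + 1) / 2 with hc
    have hc1 : z.re < c := by rw [hc]; linarith
    have hc2 : c < 1 := by rw [hc]; linarith
    obtain ⟨k, hk⟩ : ∃ k : ℕ, (2:ℝ)⁻¹ ^ k < 1 - c :=
      exists_pow_lt_of_lt_one (by linarith) (by norm_num)
    have hcs : c ≤ s1 k := by rw [s1_eq]; linarith
    set G : Set ℂ := {w : ℂ | c ≤ w.re} ∪ ⋃ m ∈ Finset.Icc 1 k,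
      ({z : ℂ | z.re = s1 m ∧ z.im ∈ Set.Icc (0:ℝ) (m:ℝ)} ∪
       {z : ℂ | z.re ∈ Set.Icc (s1 m) (s1 (m+1)) ∧ z.im = (m:ℝ)}) with hG
    have hGclosed : IsClosed G := by
      apply IsClosed.union
      · exact isClosed_le continuous_const Complex.continuous_re
      · apply Set.Finite.isClosed_biUnion (Finset.Icc 1 k).finite_toSet
        intro m _
        apply IsClosed.union
        · rw [Set.setOf_and]
          exact (isClosed_eq Complex.continuous_re continuous_const).inter
            (isClosed_Icc.preimage Complex.continuous_im)
        · rw [Set.setOf_and]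
          exact (isClosed_Icc.preimage Complex.continuous_re).inter
            (isClosed_eq Complex.continuous_im continuous_const)
    have hFG : Fset ⊆ G := by
      intro w hw
      rcases mem_Fset.mp hw with ⟨m, hm1, hcase⟩ | ⟨hr, -⟩
      · rcases le_or_gt m k with hmk | hmk
        · right
          exact Set.mem_biUnion (Finset.mem_Icc.mpr ⟨hm1, hmk⟩) hcase
        · left
          have hsk : s1 k ≤ s1 m := s1_mono hmk.le
          rcases hcase with ⟨h, -⟩ | ⟨h, -⟩
          · show c ≤ w.re; rw [h]; linarith
          · show c ≤ w.re; have := h.1; linarith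
      · left; show c ≤ w.re; rw [hr]; linarith
    have hzG : z ∈ G := closure_minimal hFG hGclosed hz
    rcases hzG with hc' | hm
    · exact absurd hc' (not_le.mpr hc1)
    · obtain ⟨m, hm, hmem⟩ := Set.mem_iUnion₂.mp hm
      exact mem_Fset.mpr (Or.inl ⟨m, (Finset.mem_Icc.mp hm).1, hmem⟩)

lemma joinedIn_compl_of_convex {t : Set ℂ} (hconv : Convex ℝ t) (hsub : t ⊆ Fsetᶜ)
    {x y : ℂ} (hx : x ∈ t) (hy : y ∈ t) : JoinedIn Fsetᶜ x y :=
  ((hconv.isPathConnected ⟨x, hx⟩).joinedIn x hx y hy).mono hsub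

lemma convex_vert (x t : ℝ) : Convex ℝ {w : ℂ | w.re = x ∧ w.im < t} := by
  have h : {w : ℂ | w.re = x ∧ w.im < t}
      = ({w : ℂ | w.re ≤ x} ∩ {w : ℂ | x ≤ w.re}) ∩ {w : ℂ | w.im < t} := by
    ext w
    simp only [Set.mem_setOf_eq, Set.mem_inter_iff, le_antisymm_iff, and_assoc]
  rw [h]
  exact ((convex_halfSpace_re_le x).inter (convex_halfSpace_re_ge x)).inter
    (convex_halfSpace_im_lt t)

lemma convex_horiz (y x : ℝ) : Convex ℝ {w : ℂ | w.im = y ∧ w.re ≤ x} := by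
  have h : {w : ℂ | w.im = y ∧ w.re ≤ x}
      = ({w : ℂ | w.im ≤ y} ∩ {w : ℂ | y ≤ w.im}) ∩ {w : ℂ | w.re ≤ x} := by
    ext w
    simp only [Set.mem_setOf_eq, Set.mem_inter_iff, le_antisymm_iff, and_assoc]
  rw [h]
  exact ((convex_halfSpace_im_le y).inter (convex_halfSpace_im_ge y)).inter
    (convex_halfSpace_re_le x)

lemma lower_subset : {w : ℂ | w.im < 0} ⊆ Fsetᶜ :=
  fun w hw hwF => absurd (Fset_im_nonneg hwF) (not_le.mpr hw)

lemma right_subset : {w : ℂ | 1 < w.re} ⊆ Fsetᶜ :=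
  fun w hw hwF => absurd (Fset_re_le_one hwF) (not_le.mpr hw)

lemma left_subset : {w : ℂ | w.re < 2⁻¹} ⊆ Fsetᶜ :=
  fun w hw hwF => absurd (half_le_Fset_re hwF) (not_le.mpr hw)

lemma joinedIn_lower {x y : ℂ} (hx : x.im < 0) (hy : y.im < 0) : JoinedIn Fsetᶜ x y :=
  joinedIn_compl_of_convex (convex_halfSpace_im_lt 0) lower_subset hx hy

lemma joined_base (z : ℂ) (hz : z ∈ Fsetᶜ) : JoinedIn Fsetᶜ z (⟨0, -1⟩ : ℂ) := by
  have hp0 : (⟨0, -1⟩ : ℂ).im < 0 := by norm_num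
  by_cases hy : z.im < 0
  · exact joinedIn_lower hy hp0
  push_neg at hy
  rcases lt_trichotomy z.re 1 with hx | hx | hx
  · -- z.re < 1
    by_cases hhalf : z.re < 2⁻¹
    · -- go straight down in {re < 1/2}
      have h1 : JoinedIn Fsetᶜ z (⟨z.re, -1⟩ : ℂ) :=
        joinedIn_compl_of_convex (convex_halfSpace_re_lt 2⁻¹) left_subset hhalf hhalf
      exact h1.trans (joinedIn_lower (by norm_num) hp0)
    push_neg at hhalf
    -- find n with s1 n ≤ z.re < s1 (n+1)
    have hex : ∃ m : ℕ, z.re < s1 (m + 1) := by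
      obtain ⟨k, hk⟩ : ∃ k : ℕ, (2:ℝ)⁻¹ ^ k < 1 - z.re :=
        exists_pow_lt_of_lt_one (by linarith) (by norm_num)
      refine ⟨k, ?_⟩
      have h2 : (2:ℝ)⁻¹ ^ (k + 1) ≤ (2:ℝ)⁻¹ ^ k := by
        rw [pow_succ]
        nlinarith [pow_nonneg (by norm_num : (0:ℝ) ≤ 2⁻¹) k]
      rw [s1_eq]; linarith
    set n := Nat.find hex with hndef
    have hnlt : z.re < s1 (n + 1) := Nat.find_spec hex
    have hn1 : 1 ≤ n := by
      by_contra h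
      have hn0 : n = 0 := by omega
      rw [hn0] at hnlt
      have : z.re < s1 1 := hnlt
      rw [s1_one] at this
      linarith
    have hnle : s1 n ≤ z.re := by
      have hmin := Nat.find_min hex (show n - 1 < n by omega)
      push_neg at hmin
      have : n - 1 + 1 = n := by omega
      rwa [this] at hmin
    by_cases hyn : (n:ℝ) < z.im
    · -- horizontal escape to the left at height z.im
      set t : Set ℂ := {w : ℂ | w.im = z.im ∧ w.re ≤ z.re} with ht
      have htsub : t ⊆ Fsetᶜ := by
        rintro w ⟨hw1, hw2⟩ hwF
        rcases mem_Fset.mp hwF with ⟨m, hm1, ⟨hr, hi⟩ | ⟨hr, hi⟩⟩ | ⟨hr, -⟩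
        · -- tooth m : w.re = s1 m, w.im ≤ m ; but w.im = z.im > n and s1 m ≤ z.re < s1 (n+1)
          have hmn : m < n + 1 := by
            have : s1 m < s1 (n+1) := by rw [← hr]; exact lt_of_le_of_lt hw2 hnlt
            exact s1_strictMono.lt_iff_lt.mp this
          have : (m:ℝ) ≤ (n:ℝ) := by exact_mod_cast Nat.lt_succ_iff.mp hmn
          have := hi.2
          rw [hw1] at this
          linarith
        · -- bar m : w.im = m = z.im > n so m ≥ n+1, w.re ≥ s1 m ≥ s1 (n+1) > z.re
          have hmn : (n:ℝ) < (m:ℝ) := by rw [← hi, hw1]; exact hyn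
          have : n + 1 ≤ m := by exact_mod_cast hmn
          have : s1 (n+1) ≤ s1 m := s1_mono this
          have := hr.1
          linarith
        · rw [hr] at hw2
          have := s1_lt_one (n+1)
          linarith
      have hz_t : z ∈ t := ⟨rfl, le_refl _⟩
      have hq1 : (⟨-1, z.im⟩ : ℂ) ∈ t := ⟨rfl, by norm_num; linarith⟩
      have h1 : JoinedIn Fsetᶜ z (⟨-1, z.im⟩ : ℂ) :=
        joinedIn_compl_of_convex (convex_horiz z.im z.re) htsub hz_t hq1
      have h2 : JoinedIn Fsetᶜ (⟨-1, z.im⟩ : ℂ) (⟨-1, -1⟩ : ℂ) :=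
        joinedIn_compl_of_convex (convex_halfSpace_re_lt 2⁻¹) left_subset
          (by norm_num) (by norm_num)
      exact (h1.trans h2).trans (joinedIn_lower (by norm_num) hp0)
    push_neg at hyn
    · -- z.im ≤ n : vertical escape down
      have hxne : s1 n < z.re := by
        rcases eq_or_lt_of_le hnle with h | h
        · exfalso
          exact hz (mem_Fset.mpr (Or.inl ⟨n, hn1, Or.inl ⟨h.symm, hy, hyn⟩⟩))
        · exact h
      have hyne : z.im < (n:ℝ) := by
        rcases eq_or_lt_of_le hyn with h | h
        · exfalso
          exact hz (mem_Fset.mpr (Or.inl ⟨n, hn1, Or.inr ⟨⟨hnle, hnlt.le⟩, h⟩⟩))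
        · exact h
      set t : Set ℂ := {w : ℂ | w.re = z.re ∧ w.im < (n:ℝ)} with ht
      have htsub : t ⊆ Fsetᶜ := by
        rintro w ⟨hw1, hw2⟩ hwF
        rcases mem_Fset.mp hwF with ⟨m, hm1, ⟨hr, hi⟩ | ⟨hr, hi⟩⟩ | ⟨hr, -⟩
        · -- tooth m : s1 m = z.re impossible
          rw [hw1] at hr
          rcases le_or_gt m n with hmn | hmn
          · have : s1 m ≤ s1 n := s1_mono hmn
            linarith
          · have : s1 (n+1) ≤ s1 m := s1_mono hmn
            linarith
        · -- bar m : w.im = m < n, z.re ≤ s1 (m+1) ≤ s1 n < z.re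
          have hmn : (m:ℝ) < (n:ℝ) := by rw [← hi]; exact hw2
          have : m + 1 ≤ n := by exact_mod_cast hmn
          have h3 : s1 (m+1) ≤ s1 n := s1_mono this
          have := hr.2
          rw [hw1] at this
          linarith
        · rw [hw1] at hr
          have := s1_lt_one (n+1)
          linarith
      have hz_t : z ∈ t := ⟨rfl, hyne⟩
      have hq : (⟨z.re, -1⟩ : ℂ) ∈ t := ⟨rfl, by show (-1:ℝ) < n; have h1n : (1:ℝ) ≤ n := (by exact_mod_cast hn1); linarith⟩
      have h1 : JoinedIn Fsetᶜ z (⟨z.re, -1⟩ : ℂ) :=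
        joinedIn_compl_of_convex (convex_vert z.re (n:ℝ)) htsub hz_t hq
      exact h1.trans (joinedIn_lower (by norm_num) hp0)
  · exact absurd (mem_Fset.mpr (Or.inr ⟨hx, hy⟩)) hz
  · -- 1 < z.re
    have h1 : JoinedIn Fsetᶜ z (⟨z.re, -1⟩ : ℂ) :=
      joinedIn_compl_of_convex (convex_halfSpace_re_gt 1) right_subset hx hx
    exact h1.trans (joinedIn_lower (by norm_num) hp0)

lemma sphereCompl_eq (V : Set ℂ) :
    sphereCompl V = insert OnePoint.infty (OnePoint.some '' Vᶜ) := by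
  ext u
  induction u using OnePoint.rec with
  | infty =>
    simp only [sphereCompl, Set.mem_compl_iff, Set.mem_image, Set.mem_insert_iff]
    constructor
    · intro _; exact Or.inl trivial
    · rintro - ⟨x, -, hx⟩
      exact OnePoint.coe_ne_infty x hx
  | coe x =>
    simp only [sphereCompl, Set.mem_compl_iff, Set.mem_image, Set.mem_insert_iff]
    constructor
    · intro h
      refine Or.inr ⟨x, fun hx => h ⟨x, hx, rfl⟩, rfl⟩
    · rintro (h | ⟨y, hy, hxy⟩) ⟨x', hx', hxx'⟩
      · exact OnePoint.coe_ne_infty x h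
      · rw [OnePoint.coe_eq_coe] at hxy hxx'
        rw [hxx'] at hx'
        rw [hxy] at hy
        exact hy hx'

lemma isConnected_sphereCompl_Fset : IsConnected (sphereCompl Fset) := by
  have hpc : IsPathConnected Fsetᶜ := by
    refine ⟨⟨0, -1⟩, lower_subset (by norm_num), fun {y} hy => ?_⟩
    exact (joined_base y hy).symm
  have hconn : IsConnected (OnePoint.some '' Fsetᶜ) :=
    hpc.isConnected.image _ OnePoint.continuous_coe.continuousOn
  rw [sphereCompl_eq]
  refine hconn.subset_closure (Set.subset_insert _ _) ?_
  intro u hu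
  rcases Set.mem_insert_iff.mp hu with h | h
  · rw [h, mem_closure_iff_nhds]
    intro t ht
    rw [(OnePoint.hasBasis_nhds_infty).mem_iff] at ht
    obtain ⟨s, ⟨-, hsc⟩, hsub⟩ := ht
    obtain ⟨R, hR⟩ := hsc.isBounded.subset_closedBall 0
    set w : ℂ := ⟨0, -(max R 0 + 1)⟩ with hw
    have hwim : w.im < 0 := by
      show -(max R 0 + 1) < 0
      have := le_max_right R 0
      linarith
    have hws : w ∉ s := by
      intro hws
      have h1 := hR hws
      rw [Metric.mem_closedBall] at h1
      have h2 : |w.im| ≤ dist w 0 := by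
        rw [Complex.dist_eq, sub_zero]
        exact Complex.abs_im_le_norm w
      rw [abs_of_neg hwim] at h2
      have := le_max_left R 0
      have := le_max_right R 0
      simp only [hw] at h2
      linarith [h2.trans h1]
    refine ⟨OnePoint.some w, hsub (Or.inl ⟨w, hws, rfl⟩), ⟨w, lower_subset hwim, rfl⟩⟩
  · exact subset_closure h

lemma no_good_V : ∃ U : Set ℂ, IsOpen U ∧ Fset ⊆ U ∧
    ¬ ∃ V : Set ℂ, IsOpen V ∧ IsConnected (sphereCompl V) ∧ Fset ⊆ V ∧ V ⊆ U := by
  refine ⟨{z : ℂ | Metric.infDist z Fset < Real.exp (-(4 * z.im) - 4)}, ?_, ?_, ?_⟩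
  · exact isOpen_lt (Metric.continuous_infDist_pt Fset)
      (Real.continuous_exp.comp (((continuous_const.mul Complex.continuous_im)).neg.sub continuous_const))
  · intro z hz
    show Metric.infDist z Fset < Real.exp (-(4 * z.im) - 4)
    rw [Metric.infDist_zero_of_mem hz]
    positivity
  rintro ⟨V, hVopen, hVconn, hFV, hVU⟩
  have h1F : (1:ℂ) ∈ Fset :=
    mem_Fset.mpr (Or.inr ⟨Complex.one_re, by rw [Complex.one_im]⟩)
  obtain ⟨ε, hε, hball⟩ := Metric.isOpen_iff.mp hVopen 1 (hFV h1F)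
  obtain ⟨k, hk⟩ := exists_pow_lt_of_lt_one hε (show (2:ℝ)⁻¹ < 1 by norm_num)
  set n := k + 1 with hn
  have hn1 : 1 ≤ n := by omega
  have hεn : (2:ℝ)⁻¹ ^ n < ε := by
    refine lt_of_le_of_lt ?_ hk
    rw [hn, pow_succ]
    nlinarith [pow_nonneg (by norm_num : (0:ℝ) ≤ 2⁻¹) k]
  set δ : ℝ := (2:ℝ)⁻¹ ^ (n+2) with hδdef
  have hδpos : 0 < δ := by positivity
  have ha : s1 n = 1 - (2:ℝ)⁻¹ ^ n := s1_eq n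
  have hb : s1 (n+1) = 1 - (2:ℝ)⁻¹ ^ (n+1) := s1_eq (n+1)
  have hp1 : (2:ℝ)⁻¹ ^ (n+1) = (2:ℝ)⁻¹ ^ n * 2⁻¹ := pow_succ _ _
  have hp2 : (2:ℝ)⁻¹ ^ (n+2) = (2:ℝ)⁻¹ ^ (n+1) * 2⁻¹ := pow_succ _ _
  set mid : ℝ := (s1 n + s1 (n+1)) / 2 with hmiddef
  have hmid1 : s1 n + δ = mid := by
    rw [hmiddef, hδdef, ha, hb, hp2, hp1]; ring
  have hmid2 : mid + δ = s1 (n+1) := by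
    rw [hmiddef, hδdef, ha, hb, hp2, hp1]; ring
  set c : ℂ := ⟨mid, (n:ℝ)/2⟩ with hcdef
  have hcre : c.re = mid := rfl
  have hcim : c.im = (n:ℝ)/2 := rfl
  have hncast : (1:ℝ) ≤ (n:ℝ) := by exact_mod_cast hn1
  -- the frame of the rectangle is inside V
  have hedge : ∀ w : ℂ, s1 n ≤ w.re → w.re ≤ s1 (n+1) → 0 ≤ w.im → w.im ≤ (n:ℝ) →
      (w.re = s1 n ∨ w.re = s1 (n+1) ∨ w.im = 0 ∨ w.im = (n:ℝ)) → w ∈ V := by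
    intro w h1 h2 h3 h4 h5
    rcases h5 with h | h | h | h
    · exact hFV (mem_Fset.mpr (Or.inl ⟨n, hn1, Or.inl ⟨h, h3, h4⟩⟩))
    · refine hFV (mem_Fset.mpr (Or.inl ⟨n+1, by omega, Or.inl ⟨h, h3, ?_⟩⟩))
      have hc1 : ((n+1:ℕ):ℝ) = (n:ℝ) + 1 := by push_cast; ring
      rw [hc1]; linarith
    · apply hball
      rw [Metric.mem_ball, Complex.dist_eq]
      have e1 : ‖w - 1‖ ≤ |(w - 1).re| + |(w - 1).im| :=
        Complex.norm_le_abs_re_add_abs_im _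
      rw [Complex.sub_re, Complex.sub_im, Complex.one_re, Complex.one_im, h] at e1
      have e2 : |w.re - 1| = 1 - w.re := by
        rw [abs_of_nonpos (by linarith [s1_lt_one (n+1)])]; ring
      rw [e2] at e1
      have : (1:ℝ) - w.re ≤ (2:ℝ)⁻¹ ^ n := by linarith
      simp only [sub_zero, abs_zero] at e1
      linarith
    · exact hFV (mem_Fset.mpr (Or.inl ⟨n, hn1, Or.inr ⟨⟨h1, h2⟩, h⟩⟩))
  -- c is far from Fset
  have hfar : ∀ w ∈ Fset, δ ≤ dist c w := by
    intro w hw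
    have hAre : |c.re - w.re| ≤ dist c w := by
      rw [Complex.dist_eq, ← Complex.sub_re]
      exact Complex.abs_re_le_norm _
    have hAim : |c.im - w.im| ≤ dist c w := by
      rw [Complex.dist_eq, ← Complex.sub_im]
      exact Complex.abs_im_le_norm _
    rcases mem_Fset.mp hw with ⟨m, hm1, ⟨hr, hi⟩ | ⟨hr, hi⟩⟩ | ⟨hr, -⟩
    · -- tooth m
      rcases le_or_gt m n with hmn | hmn
      · have hs : s1 m ≤ s1 n := s1_mono hmn
        have : δ ≤ c.re - w.re := by rw [hcre, hr]; linarith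
        exact le_trans (le_trans this (le_abs_self _)) hAre
      · have hs : s1 (n+1) ≤ s1 m := s1_mono hmn
        have : δ ≤ w.re - c.re := by rw [hcre, hr]; linarith
        refine le_trans ?_ hAre
        rw [abs_sub_comm]
        exact le_trans this (le_abs_self _)
    · -- bar m
      rcases lt_trichotomy m n with hmn | hmn | hmn
      · have hs : s1 (m+1) ≤ s1 n := s1_mono (by omega)
        have hwre := hr.2
        have : δ ≤ c.re - w.re := by rw [hcre]; linarith
        exact le_trans (le_trans this (le_abs_self _)) hAre
      · -- m = n : vertical distance n/2
        have hwim : w.im = (n:ℝ) := by rw [hi, hmn]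
        have hδhalf : δ ≤ 2⁻¹ := by
          rw [hδdef]
          calc (2:ℝ)⁻¹ ^ (n+2) ≤ (2:ℝ)⁻¹ ^ 1 :=
                pow_le_pow_of_le_one (by norm_num) (by norm_num) (by omega)
          _ = 2⁻¹ := pow_one _
        have : δ ≤ w.im - c.im := by rw [hcim, hwim]; linarith
        refine le_trans ?_ hAim
        rw [abs_sub_comm]
        exact le_trans this (le_abs_self _)
      · have hs : s1 (n+1) ≤ s1 m := s1_mono (by omega)
        have hwre := hr.1
        have : δ ≤ w.re - c.re := by rw [hcre]; linarith
        refine le_trans ?_ hAre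
        rw [abs_sub_comm]
        exact le_trans this (le_abs_self _)
    · -- ray
      have : δ ≤ w.re - c.re := by
        rw [hcre, hr]
        have := s1_lt_one (n+1)
        linarith
      refine le_trans ?_ hAre
      rw [abs_sub_comm]
      exact le_trans this (le_abs_self _)
  have hcV : c ∉ V := by
    intro hcV
    have hcU := hVU hcV
    simp only [Set.mem_setOf_eq] at hcU
    have hexp : Real.exp (-(4 * c.im) - 4) ≤ δ := by
      have h3 : (2:ℝ) ≤ Real.exp 2 := by nlinarith [Real.add_one_le_exp (2:ℝ)]
      have h2 : (2:ℝ) ^ (n+2) ≤ Real.exp (2 * (n:ℝ) + 4) := by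
        calc (2:ℝ) ^ (n+2) ≤ (Real.exp 2) ^ (n+2) :=
              pow_le_pow_left₀ (by norm_num) h3 _
        _ = Real.exp (((n+2 : ℕ) : ℝ) * 2) := (Real.exp_nat_mul _ _).symm
        _ = Real.exp (2 * (n:ℝ) + 4) := by push_cast; ring_nf
      have heq : -(4 * c.im) - 4 = -(2 * (n:ℝ) + 4) := by rw [hcim]; ring
      rw [heq, Real.exp_neg, hδdef, inv_pow]
      exact inv_anti₀ (by positivity) h2
    have hlt : Metric.infDist c Fset < δ := lt_of_lt_of_le hcU hexp
    obtain ⟨w, hwF, hwd⟩ := (Metric.infDist_lt_iff ⟨1, h1F⟩).mp hlt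
    exact absurd hwd (not_lt.mpr (hfar w hwF))
  -- the rectangle
  set RectO : Set ℂ :=
    {w : ℂ | s1 n < w.re} ∩ ({w : ℂ | w.re < s1 (n+1)} ∩
      ({w : ℂ | 0 < w.im} ∩ {w : ℂ | w.im < (n:ℝ)})) with hRO
  set Rect : Set ℂ :=
    {w : ℂ | s1 n ≤ w.re} ∩ ({w : ℂ | w.re ≤ s1 (n+1)} ∩
      ({w : ℂ | 0 ≤ w.im} ∩ {w : ℂ | w.im ≤ (n:ℝ)})) with hR
  have hOopen : IsOpen RectO := by
    refine (isOpen_lt continuous_const Complex.continuous_re).inter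
      ((isOpen_lt Complex.continuous_re continuous_const).inter
        ((isOpen_lt continuous_const Complex.continuous_im).inter
          (isOpen_lt Complex.continuous_im continuous_const)))
  have hRclosed : IsClosed Rect := by
    refine (isClosed_le continuous_const Complex.continuous_re).inter
      ((isClosed_le Complex.continuous_re continuous_const).inter
        ((isClosed_le continuous_const Complex.continuous_im).inter
          (isClosed_le Complex.continuous_im continuous_const)))
  have hRcompact : IsCompact Rect := by
    apply Metric.isCompact_of_isClosed_isBounded hRclosed
    apply Bornology.IsBounded.subset (Metric.isBounded_closedBall (x := (0:ℂ)) (r := 1 + (n:ℝ)))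
    rintro w ⟨h1, h2, h3, h4⟩
    simp only [Set.mem_setOf_eq] at h1 h2 h3 h4
    rw [Metric.mem_closedBall, Complex.dist_eq, sub_zero]
    have e1 : ‖w‖ ≤ |w.re| + |w.im| := Complex.norm_le_abs_re_add_abs_im _
    have h0 : 0 ≤ s1 n := by rw [ha]; nlinarith [pow_le_one₀ (by norm_num : (0:ℝ) ≤ 2⁻¹) (by norm_num : (2:ℝ)⁻¹ ≤ 1) (n := n)]
    have : |w.re| ≤ 1 := by
      rw [abs_of_nonneg (by linarith : (0:ℝ) ≤ w.re)]
      linarith [s1_lt_one (n+1)]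
    have : |w.im| ≤ (n:ℝ) := by rwa [abs_of_nonneg h3]
    linarith
  have hsub : RectO ⊆ Rect := by
    rintro w ⟨h1, h2, h3, h4⟩
    simp only [Set.mem_setOf_eq] at h1 h2 h3 h4
    exact ⟨h1.le, h2.le, h3.le, h4.le⟩
  have hedge' : ∀ w ∈ Rect, w ∉ RectO → w ∈ V := by
    rintro w ⟨h1, h2, h3, h4⟩ hw
    simp only [hRO, Set.mem_inter_iff, Set.mem_setOf_eq, not_and_or, not_lt] at hw
    rcases hw with h | h | h | h
    · exact hedge w h1 h2 h3 h4 (Or.inl (le_antisymm h h1))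
    · exact hedge w h1 h2 h3 h4 (Or.inr (Or.inl (le_antisymm h2 h)))
    · exact hedge w h1 h2 h3 h4 (Or.inr (Or.inr (Or.inl (le_antisymm h h3))))
    · exact hedge w h1 h2 h3 h4 (Or.inr (Or.inr (Or.inr (le_antisymm h4 h))))
  have hcRectO : c ∈ RectO := by
    refine ⟨?_, ?_, ?_, ?_⟩
    · show s1 n < c.re; rw [hcre]; linarith
    · show c.re < s1 (n+1); rw [hcre]; linarith
    · show (0:ℝ) < c.im; rw [hcim]; linarith
    · show c.im < (n:ℝ); rw [hcim]; linarith
  -- pass to the sphere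
  set T : Set (OnePoint ℂ) := OnePoint.some '' RectO with hT
  have hTopen : IsOpen T := OnePoint.isOpenMap_coe _ hOopen
  have hKcompact : IsCompact (OnePoint.some '' Rect) :=
    hRcompact.image OnePoint.continuous_coe
  have hclT : closure T ⊆ OnePoint.some '' Rect :=
    closure_minimal (Set.image_mono hsub) hKcompact.isClosed
  obtain ⟨-, hpre⟩ := hVconn
  have hinfty : OnePoint.infty ∈ sphereCompl V := by
    rintro ⟨x, -, hx⟩
    exact OnePoint.coe_ne_infty x hx
  have hcS : (OnePoint.some c) ∈ sphereCompl V := by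
    rintro ⟨x, hxV, hx⟩
    rw [OnePoint.coe_eq_coe] at hx
    rw [hx] at hxV
    exact hcV hxV
  have hcover : sphereCompl V ⊆ T ∪ (closure T)ᶜ := by
    intro u hu
    by_cases hcl : u ∈ closure T
    · obtain ⟨w, hwR, rfl⟩ := hclT hcl
      by_cases hwO : w ∈ RectO
      · exact Or.inl ⟨w, hwO, rfl⟩
      · exact absurd (Set.mem_image_of_mem _ (hedge' w hwR hwO)) hu
    · exact Or.inr hcl
  have hne1 : (sphereCompl V ∩ T).Nonempty :=
    ⟨OnePoint.some c, hcS, ⟨c, hcRectO, rfl⟩⟩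
  have hne2 : (sphereCompl V ∩ (closure T)ᶜ).Nonempty := by
    refine ⟨OnePoint.infty, hinfty, fun h => ?_⟩
    obtain ⟨w, -, hw⟩ := hclT h
    exact OnePoint.coe_ne_infty w hw
  obtain ⟨u, -, huT, hucl⟩ := hpre T (closure T)ᶜ hTopen
    (isOpen_compl_iff.mpr isClosed_closure) hcover hne1 hne2
  exact hucl (subset_closure huT)

theorem stmt1 :
    IsClosed Fset ∧ IsConnected (sphereCompl Fset) ∧
    ∃ U : Set ℂ, IsOpen U ∧ Fset ⊆ U ∧
      ¬ ∃ V : Set ℂ, IsOpen V ∧ IsConnected (sphereCompl V) ∧ Fset ⊆ V ∧ V ⊆ U := by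
  exact ⟨isClosed_Fset, isConnected_sphereCompl_Fset, no_good_V⟩
end
end

section
/- Let Ω ⊆ ℂ be open and F ⊆ Ω relatively closed with no holes in Ω. Then F is an Arakelian set in Ω if and only if for every compact K ⊆ Ω, the union of all holes of F ∪ K in Ω is contained in a compact subset of Ω. -/
open Topology Filter Set

noncomputable section

namespace Arak

open OnePoint

variable {Ω : Set ℂ}

/-- The subset of the subtype `↥Ω` corresponding to `G ⊆ ℂ`. -/
def osub (Ω : Set ℂ) (G : Set ℂ) : Set ↥Ω := Subtype.val ⁻¹' G

/-- The image of `G ⊆ ℂ` inside the one-point compactification of `Ω`. -/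
def oimg (Ω : Set ℂ) (G : Set ℂ) : Set (OnePoint ↥Ω) := (↑) '' osub Ω G

lemma val_osub {G : Set ℂ} (hG : G ⊆ Ω) : Subtype.val '' osub Ω G = G := by
  rw [osub, Subtype.image_preimage_coe, inter_eq_right.2 hG]

lemma osub_diff (E : Set ℂ) : osub Ω (Ω \ E) = osub Ω Eᶜ := by
  ext x; simp [osub, x.2]

lemma oimg_union (G₁ G₂ : Set ℂ) : oimg Ω (G₁ ∪ G₂) = oimg Ω G₁ ∪ oimg Ω G₂ := by
  simp [oimg, osub, preimage_union, image_union]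

lemma oimg_mono {G₁ G₂ : Set ℂ} (h : G₁ ⊆ G₂) : oimg Ω G₁ ⊆ oimg Ω G₂ :=
  image_mono (preimage_mono h)

lemma compl_oimg (E : Set ℂ) : (oimg Ω E)ᶜ = oimg Ω Eᶜ ∪ {∞} := by
  rw [oimg, OnePoint.compl_image_coe]
  rfl

lemma osub_isCompact {K : Set ℂ} (hK : IsCompact K) (hKΩ : K ⊆ Ω) :
    IsCompact (osub Ω K) := by
  rw [Subtype.isCompact_iff, val_osub hKΩ]; exact hK

lemma isOpen_compl_oimg {K : Set ℂ} (hK : IsCompact K) (hKΩ : K ⊆ Ω) :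
    IsOpen (oimg Ω K)ᶜ :=
  OnePoint.isOpen_compl_image_coe.2 ⟨(osub_isCompact hK hKΩ).isClosed, osub_isCompact hK hKΩ⟩

lemma isOpen_oimg {G : Set ℂ} (hG : IsOpen G) : IsOpen (oimg Ω G) :=
  OnePoint.isOpen_image_coe.2 (hG.preimage continuous_subtype_val)

lemma ocCompl_eq (F : Set ℂ) : ocCompl Ω F = (oimg Ω F)ᶜ := rfl

/-- Infinity is in the closure of the image of any set not contained in a compact
subset of `Ω`. -/
lemma infty_mem_closure {D : Set ℂ} (hD : D ⊆ Ω)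
    (h : ∀ K : Set ℂ, IsCompact K → K ⊆ Ω → ¬ D ⊆ K) :
    (∞ : OnePoint ↥Ω) ∈ closure (oimg Ω D) := by
  rw [mem_closure_iff_nhds]
  intro U hU
  obtain ⟨s, ⟨hscl, hsc⟩, hsU⟩ := (OnePoint.hasBasis_nhds_infty).mem_iff.mp hU
  have hKc : IsCompact (Subtype.val '' s) := hsc.image continuous_subtype_val
  have hKΩ : Subtype.val '' s ⊆ Ω := by rintro x ⟨y, -, rfl⟩; exact y.2
  obtain ⟨y, hyD, hyK⟩ := not_subset.mp (h _ hKc hKΩ)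
  refine ⟨(⟨y, hD hyD⟩ : ↥Ω), hsU (Or.inl ⟨⟨y, hD hyD⟩, fun hs => hyK ⟨_, hs, rfl⟩, rfl⟩),
    ⟨⟨y, hD hyD⟩, hyD, rfl⟩⟩

/-- If every connected component of `G ⊆ Ω` fails to be contained in a compact subset
of `Ω`, then the image of `G` together with `∞` is connected. -/
lemma conn_aux {G : Set ℂ} (hG : G ⊆ Ω)
    (h : ∀ x ∈ G, ∀ K : Set ℂ, IsCompact K → K ⊆ Ω → ¬ connectedComponentIn G x ⊆ K) :
    IsConnected (oimg Ω G ∪ {∞}) := by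
  have hcomp : ∀ x ∈ G, IsPreconnected (oimg Ω (connectedComponentIn G x) ∪ {∞}) := by
    intro x hx
    have hDsub : connectedComponentIn G x ⊆ G := connectedComponentIn_subset G x
    have hDpre : IsPreconnected (connectedComponentIn G x) := isPreconnected_connectedComponentIn
    have hsubpre : IsPreconnected (osub Ω (connectedComponentIn G x)) := by
      have := IsInducing.subtypeVal.isPreconnected_image
        (s := osub Ω (connectedComponentIn G x)) (f := (Subtype.val : ↥Ω → ℂ))
      rw [val_osub (hDsub.trans hG)] at this
      exact this.mp hDpre
    have himg : IsPreconnected (oimg Ω (connectedComponentIn G x)) :=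
      hsubpre.image _ OnePoint.continuous_coe.continuousOn
    refine himg.subset_closure subset_union_left (union_subset subset_closure ?_)
    rw [singleton_subset_iff]
    exact infty_mem_closure (hDsub.trans hG) (fun K hK hKΩ => h x hx K hK hKΩ)
  set c : Set (Set (OnePoint ↥Ω)) :=
    insert {∞} ((fun x : ℂ => oimg Ω (connectedComponentIn G x) ∪ {∞}) '' G) with hc
  have hU : ⋃₀ c = oimg Ω G ∪ {∞} := by
    apply subset_antisymm
    · rintro t ⟨S, hS, htS⟩
      rcases hS with rfl | ⟨x, hx, rfl⟩
      · exact Or.inr htS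
      · rcases htS with ⟨y, hy, rfl⟩ | h'
        · exact Or.inl ⟨y, connectedComponentIn_subset G x hy, rfl⟩
        · exact Or.inr h'
    · rintro t (⟨y, hy, rfl⟩ | ht)
      · exact ⟨_, Or.inr ⟨(y : ℂ), hy, rfl⟩, Or.inl ⟨y, mem_connectedComponentIn hy, rfl⟩⟩
      · exact ⟨{∞}, Or.inl rfl, ht⟩
  rw [← hU]
  refine ⟨⟨∞, ⟨{∞}, Or.inl rfl, rfl⟩⟩, isPreconnected_sUnion ∞ c ?_ ?_⟩
  · rintro S (rfl | ⟨x, hx, rfl⟩)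
    · rfl
    · exact Or.inr rfl
  · rintro S (rfl | ⟨x, hx, rfl⟩)
    · exact isPreconnected_singleton
    · exact hcomp x hx

/-- The complement of a connected component in an open set is open. -/
lemma open_diff_component {O : Set ℂ} (hO : IsOpen O) (B : Set ℂ) {x : ℂ}
    (hB : B = connectedComponentIn O x) : IsOpen (O \ B) := by
  rw [isOpen_iff_mem_nhds]
  intro y hy
  have hyO : y ∈ O := hy.1
  have hmem : connectedComponentIn O y ∈ 𝓝 y :=
    (hO.connectedComponentIn (x := y)).mem_nhds (mem_connectedComponentIn hyO)
  refine Filter.mem_of_superset hmem ?_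
  intro z hz
  refine ⟨connectedComponentIn_subset O y hz, fun hzB => hy.2 ?_⟩
  rw [hB] at hzB ⊢
  rw [connectedComponentIn_eq hzB, ← connectedComponentIn_eq hz]
  exact mem_connectedComponentIn hyO

lemma relClosed_open_compl (hΩ : IsOpen Ω) {F : Set ℂ} (hF : RelClosed Ω F) :
    IsOpen (Ω \ F) := by
  have : Ω \ F = Subtype.val '' ((Subtype.val ⁻¹' F : Set ↥Ω))ᶜ := by
    ext y
    constructor
    · rintro ⟨hyΩ, hyF⟩; exact ⟨⟨y, hyΩ⟩, hyF, rfl⟩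
    · rintro ⟨z, hz, rfl⟩; exact ⟨z.2, hz⟩
  rw [this]
  exact hΩ.isOpenMap_subtype_val _ hF.2.isOpen_compl

/-- Forward direction: local connectedness at `∞` implies that the holes of `F ∪ K`
are contained in a compact subset of `Ω`. -/
lemma forward_dir (hΩ : IsOpen Ω) {F : Set ℂ} (hF : RelClosed Ω F)
    (hlc : LocConnAt (ocCompl Ω F) OnePoint.infty)
    (K : Set ℂ) (hK : IsCompact K) (hKΩ : K ⊆ Ω) :
    ∃ L : Set ℂ, IsCompact L ∧ L ⊆ Ω ∧ holesUnion Ω (F ∪ K) ⊆ L := by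
  set O : Set ℂ := Ω \ (F ∪ K) with hO_def
  have hO : IsOpen O := by
    have : O = (Ω \ F) ∩ Kᶜ := by ext y; simp [hO_def]; tauto
    rw [this]; exact (relClosed_open_compl hΩ hF).inter hK.isClosed.isOpen_compl
  have hUopen : IsOpen (oimg Ω K)ᶜ := isOpen_compl_oimg hK hKΩ
  have hUnhds : (oimg Ω K)ᶜ ∈ 𝓝 (∞ : OnePoint ↥Ω) :=
    hUopen.mem_nhds OnePoint.infty_notMem_image_coe
  obtain ⟨W, hWnhds, hWU, hWconn⟩ := hlc _ hUnhds
  obtain ⟨s, ⟨hscl, hsc⟩, hsW⟩ := (OnePoint.hasBasis_nhds_infty).mem_iff.mp hWnhds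
  refine ⟨Subtype.val '' s, hsc.image continuous_subtype_val,
    (by rintro x ⟨y, -, rfl⟩; exact y.2), ?_⟩
  rintro b ⟨B, hBhole, hbB⟩
  by_contra hbL
  obtain ⟨⟨x₀, hx₀O, hBdef⟩, LB, hLBc, hLBΩ, hBLB⟩ := hBhole
  have hBO : B ⊆ O := hBdef ▸ connectedComponentIn_subset O x₀
  have hbΩ : b ∈ Ω := (hBO hbB).1
  set bX : ↥Ω := ⟨b, hbΩ⟩ with hbX
  have hbs : bX ∉ s := fun hs => hbL ⟨bX, hs, rfl⟩
  have hbW : (bX : OnePoint ↥Ω) ∈ W := hsW (Or.inl ⟨bX, hbs, rfl⟩)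
  have hbS : (bX : OnePoint ↥Ω) ∈ ocCompl Ω F := by
    rintro ⟨z, hz, hzb⟩
    exact (hBO hbB).2 (Or.inl (by rwa [OnePoint.coe_eq_coe.mp hzb] at hz))
  set u : Set (OnePoint ↥Ω) := oimg Ω B with hu_def
  set v : Set (OnePoint ↥Ω) := (oimg Ω LB)ᶜ ∪ oimg Ω (O \ B) with hv_def
  have hBopen : IsOpen B := hBdef ▸ hO.connectedComponentIn
  have hu : IsOpen u := isOpen_oimg hBopen
  have hv : IsOpen v :=
    (isOpen_compl_oimg hLBc hLBΩ).union (isOpen_oimg (open_diff_component hO B hBdef))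
  have hsub : W ∩ ocCompl Ω F ⊆ u ∪ v := by
    rintro t ⟨htW, htS⟩
    induction t using OnePoint.rec with
    | infty => exact Or.inr (Or.inl OnePoint.infty_notMem_image_coe)
    | coe y =>
      have hyK : (y : ℂ) ∉ K := by
        intro hyK
        exact hWU htW ⟨y, hyK, rfl⟩
      have hyF : (y : ℂ) ∉ F := fun hyF => htS ⟨y, hyF, rfl⟩
      have hyO : (y : ℂ) ∈ O := ⟨y.2, fun hh => hh.elim hyF hyK⟩
      by_cases hyB : (y : ℂ) ∈ B
      · exact Or.inl ⟨y, hyB, rfl⟩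
      · exact Or.inr (Or.inr ⟨y, ⟨hyO, hyB⟩, rfl⟩)
  have hdisj : W ∩ ocCompl Ω F ∩ (u ∩ v) = ∅ := by
    rw [eq_empty_iff_forall_notMem]
    rintro t ⟨-, ⟨y, hyB, hyt⟩, hvv⟩
    rcases hvv with hvv | ⟨z, hz, hzt⟩
    · exact hvv (hyt ▸ ⟨y, hBLB hyB, rfl⟩)
    · have : (z : ℂ) = (y : ℂ) := by
        have := hzt.trans hyt.symm
        exact congrArg Subtype.val (OnePoint.coe_eq_coe.mp this)
      exact hz.2 (this ▸ hyB)
  have hne_u : (W ∩ ocCompl Ω F ∩ u).Nonempty := ⟨bX, ⟨hbW, hbS⟩, ⟨bX, hbB, rfl⟩⟩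
  have hne_v : (W ∩ ocCompl Ω F ∩ v).Nonempty := by
    refine ⟨∞, ⟨mem_of_mem_nhds hWnhds, ?_⟩, Or.inl OnePoint.infty_notMem_image_coe⟩
    exact fun h => OnePoint.infty_notMem_image_coe h
  obtain ⟨t, ht⟩ := hWconn.isPreconnected u v hu hv hsub hne_u hne_v
  have : t ∈ W ∩ ocCompl Ω F ∩ (u ∩ v) := ht
  rw [hdisj] at this
  exact this

end Arak

open Arak OnePoint in
theorem stmt2 (Ω F : Set ℂ) (hΩ : IsOpen Ω) (hF : RelClosed Ω F)
    (hnoholes : ∀ B : Set ℂ, ¬ IsHole Ω F B) :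
    ArakelianIn Ω F ↔
      ∀ K : Set ℂ, IsCompact K → K ⊆ Ω →
        ∃ L : Set ℂ, IsCompact L ∧ L ⊆ Ω ∧ holesUnion Ω (F ∪ K) ⊆ L := by
  constructor
  · intro hA K hK hKΩ
    exact forward_dir hΩ hF hA.2.2 K hK hKΩ
  · intro hcond
    refine ⟨hF, ?_, ?_⟩
    · -- connectedness of the complement
      have h1 : ocCompl Ω F = oimg Ω (Ω \ F) ∪ {∞} := by
        rw [ocCompl_eq, compl_oimg, oimg, oimg, osub_diff]
      rw [h1]
      refine conn_aux diff_subset ?_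
      intro x hx K hK hKΩ hsub
      exact hnoholes _ ⟨⟨x, hx, rfl⟩, K, hK, hKΩ, hsub⟩
    · -- local connectedness at infinity
      intro U hU
      obtain ⟨s, ⟨hscl, hsc⟩, hsU⟩ := (OnePoint.hasBasis_nhds_infty).mem_iff.mp hU
      set K : Set ℂ := Subtype.val '' s with hK_def
      have hKc : IsCompact K := hsc.image continuous_subtype_val
      have hKΩ : K ⊆ Ω := by rintro x ⟨y, -, rfl⟩; exact y.2
      obtain ⟨L, hLc, hLΩ, hHL⟩ := hcond K hKc hKΩ
      set H : Set ℂ := holesUnion Ω (F ∪ K) with hH_def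
      set O : Set ℂ := Ω \ (F ∪ K) with hO_def
      have hHO : H ⊆ O := by
        rintro y ⟨B, hB, hyB⟩
        obtain ⟨⟨x₀, hx₀, hBdef⟩, -⟩ := hB
        exact (hBdef ▸ connectedComponentIn_subset O x₀) hyB
      set W : Set (OnePoint ↥Ω) := (oimg Ω (K ∪ H))ᶜ with hW_def
      have hWnhds : W ∈ 𝓝 (∞ : OnePoint ↥Ω) := by
        refine Filter.mem_of_superset
          ((isOpen_compl_oimg (hKc.union hLc) (union_subset hKΩ hLΩ)).mem_nhds
            OnePoint.infty_notMem_image_coe) ?_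
        exact compl_subset_compl.2 (oimg_mono (union_subset_union_right K hHL))
      have hWU : W ⊆ U := by
        have h2 : W ⊆ (oimg Ω K)ᶜ :=
          compl_subset_compl.2 (oimg_mono subset_union_left)
        have h3 : (oimg Ω K)ᶜ ⊆ U := by
          have : osub Ω K = s := by
            rw [hK_def, osub, preimage_image_eq _ Subtype.val_injective]
          rw [oimg, this, OnePoint.compl_image_coe]
          exact hsU
        exact h2.trans h3
      refine ⟨W, hWnhds, hWU, ?_⟩
      have hWS : W ∩ ocCompl Ω F = oimg Ω (Ω \ (F ∪ (K ∪ H))) ∪ {∞} := by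
        rw [hW_def, ocCompl_eq, ← compl_union, ← oimg_union, union_comm, compl_oimg]
        simp only [oimg]
        rw [osub_diff]
      rw [hWS]
      refine conn_aux diff_subset ?_
      intro x hx Kc hKcc hKcΩ hsub
      -- x is in O and not in H
      have hxO : x ∈ O := ⟨hx.1, fun hh => hx.2 (hh.imp id Or.inl)⟩
      have hxH : x ∉ H := fun h => hx.2 (Or.inr (Or.inr h))
      set D : Set ℂ := connectedComponentIn O x with hD_def
      have hDH : ∀ y ∈ D, y ∉ H := by
        intro y hyD hyH
        obtain ⟨B, hB, hyB⟩ := hyH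
        obtain ⟨⟨x', hx', hBdef⟩, hBcpt⟩ := hB
        have hDB : D = B := by
          rw [hD_def, connectedComponentIn_eq hyD, hBdef, connectedComponentIn_eq
            (show y ∈ connectedComponentIn O x' from hBdef ▸ hyB)]
        exact hxH ⟨B, ⟨⟨x', hx', hBdef⟩, hBcpt⟩, hDB ▸ mem_connectedComponentIn hxO⟩
      have hDG : D ⊆ Ω \ (F ∪ (K ∪ H)) := by
        intro y hyD
        have hyO : y ∈ O := connectedComponentIn_subset O x hyD
        exact ⟨hyO.1, fun hh => hh.elim (fun h => hyO.2 (Or.inl h))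
          (fun hh' => hh'.elim (fun h => hyO.2 (Or.inr h)) (fun h => hDH y hyD h))⟩
      have hDeq : connectedComponentIn (Ω \ (F ∪ (K ∪ H))) x = D := by
        apply subset_antisymm
        · exact connectedComponentIn_mono x (fun y hy => ⟨hy.1, fun hh => hy.2 (hh.imp id Or.inl)⟩)
        · exact isPreconnected_connectedComponentIn.subset_connectedComponentIn
            (mem_connectedComponentIn hxO) hDG
      rw [hDeq] at hsub
      exact hxH ⟨D, ⟨⟨x, hxO, hD_def⟩, Kc, hKcc, hKcΩ, hsub⟩, mem_connectedComponentIn hxO⟩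
end
end

section
/- Let Ω ⊆ ℂ be open and F ⊆ Ω relatively closed. Then (Ω ∪ {α}) \ F is connected if and only if F has no holes in Ω. -/
open Topology Filter Set

noncomputable section

section Aux

variable (Ω F : Set ℂ)

lemma aux_infty_mem : (OnePoint.infty : OnePoint Ω) ∈ ocCompl Ω F := by
  intro h
  obtain ⟨x, -, hx⟩ := h
  exact Option.some_ne_none x hx

lemma aux_some_mem {z : Ω} : (OnePoint.some z ∈ ocCompl Ω F) ↔ (z : ℂ) ∉ F := by
  constructor
  · intro h hz; exact h ⟨z, hz, rfl⟩
  · rintro h ⟨y, hy, hyz⟩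
    have : y = z := Option.some_injective _ hyz
    exact h (this ▸ hy)

lemma aux_open (hΩ : IsOpen Ω) (hF : RelClosed Ω F) : IsOpen (Ω \ F) := by
  have h1 : IsOpen ((fun x : Ω => (x : ℂ)) ⁻¹' F)ᶜ := hF.2.isOpen_compl
  have h2 : IsOpenMap (Subtype.val : Ω → ℂ) := hΩ.isOpenMap_subtype_val
  have := h2 _ h1
  convert this using 1
  ext w
  simp only [mem_image, mem_compl_iff, mem_preimage, mem_diff]
  constructor
  · rintro ⟨hwΩ, hwF⟩; exact ⟨⟨w, hwΩ⟩, hwF, rfl⟩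
  · rintro ⟨⟨y, hy⟩, hyF, rfl⟩; exact ⟨hy, hyF⟩

/-- The image in `ℂ` of the subtype preimage of `A ⊆ Ω`. -/
lemma aux_val_image {A : Set ℂ} (hA : A ⊆ Ω) :
    Subtype.val '' {x : Ω | (x : ℂ) ∈ A} = A := by
  ext w
  simp only [mem_image, mem_setOf_eq]
  constructor
  · rintro ⟨⟨y, hy⟩, hyA, rfl⟩; exact hyA
  · intro hw; exact ⟨⟨w, hA hw⟩, hw, rfl⟩

lemma aux_preconn {A : Set ℂ} (hA : A ⊆ Ω) (h : IsPreconnected A) :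
    IsPreconnected (OnePoint.some '' {x : Ω | (x : ℂ) ∈ A}) := by
  have h1 : IsPreconnected {x : Ω | (x : ℂ) ∈ A} := by
    rw [← Topology.IsInducing.subtypeVal.isPreconnected_image, aux_val_image Ω hA]
    exact h
  exact h1.image _ (OnePoint.continuous_coe).continuousOn

end Aux

theorem stmt3 (Ω F : Set ℂ) (hΩ : IsOpen Ω) (hF : RelClosed Ω F) :
    IsConnected (ocCompl Ω F) ↔ ∀ B : Set ℂ, ¬ IsHole Ω F B := by
  have hopen : IsOpen (Ω \ F) := aux_open Ω F hΩ hF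
  constructor
  · -- connected → no holes
    rintro hconn B ⟨⟨x, hx, rfl⟩, K, hK, hKΩ, hBK⟩
    set B := connectedComponentIn (Ω \ F) x with hBdef
    have hBsub : B ⊆ Ω \ F := connectedComponentIn_subset _ _
    set B' : Set Ω := {z : Ω | (z : ℂ) ∈ B} with hB'def
    -- the image of B' is open
    have hBopen : IsOpen B := hopen.connectedComponentIn
    have hB'open : IsOpen B' := hBopen.preimage continuous_subtype_val
    have hU1 : IsOpen (OnePoint.some '' B' : Set (OnePoint Ω)) :=
      OnePoint.isOpen_image_coe.2 hB'open
    -- K' is compact and closed in Ω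
    set K' : Set Ω := Subtype.val ⁻¹' K with hK'def
    have hK'comp : IsCompact K' := by
      rw [Topology.IsEmbedding.subtypeVal.isCompact_iff]
      have : Subtype.val '' K' = K := by
        rw [hK'def, Subtype.image_preimage_coe]
        exact inter_eq_right.2 hKΩ
      rwa [this]
    have hK'closed : IsClosed K' := hK'comp.isClosed
    -- ∞ is not in the closure of some '' B'
    have hB'K' : B' ⊆ K' := fun z hz => hBK hz
    have hinfty_not : (OnePoint.infty : OnePoint Ω) ∉
        closure (OnePoint.some '' B') := by
      intro hmem
      rw [mem_closure_iff] at hmem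
      obtain ⟨p, hp1, hp2⟩ := hmem ((OnePoint.some '' K')ᶜ)
        (OnePoint.isOpen_compl_image_coe.2 ⟨hK'closed, hK'comp⟩)
        (by simp [OnePoint.infty_notMem_image_coe])
      obtain ⟨z, hz, rfl⟩ := hp2
      exact hp1 ⟨z, hB'K' hz, rfl⟩
    -- separation: U1 = some '' B', U2 = (closure (some '' B'))ᶜ
    have hcl : ocCompl Ω F ∩ closure (OnePoint.some '' B') ⊆ OnePoint.some '' B' := by
      rintro p ⟨hpS, hpcl⟩
      cases p with
      | infty => exact absurd hpcl hinfty_not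
      | coe z =>
        have hzF : (z : ℂ) ∉ F := (aux_some_mem Ω F).1 hpS
        have hzΩF : (z : ℂ) ∈ Ω \ F := ⟨z.2, hzF⟩
        -- z ∈ closure B' in Ω
        have hzB' : z ∈ closure B' := by
          have := (OnePoint.isOpenEmbedding_coe (X := Ω)).isEmbedding.closure_eq_preimage_closure_image B'
          rw [this]; exact hpcl
        have hzB : (z : ℂ) ∈ closure B := by
          have h1 : Subtype.val '' closure B' ⊆ closure (Subtype.val '' B') :=
            image_closure_subset_closure_image continuous_subtype_val
          have h2 : Subtype.val '' B' = B := aux_val_image Ω (hBsub.trans diff_subset)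
          have := h1 ⟨z, hzB', rfl⟩
          rwa [h2] at this
        -- the component of z meets B, so it equals B
        have hcomp : connectedComponentIn (Ω \ F) (z : ℂ) ∈ 𝓝 (z : ℂ) :=
          connectedComponentIn_mem_nhds (hopen.mem_nhds hzΩF)
        obtain ⟨y, hy1, hy2⟩ := mem_closure_iff_nhds.1 hzB _ hcomp
        have e1 : connectedComponentIn (Ω \ F) (z : ℂ) = connectedComponentIn (Ω \ F) y :=
          connectedComponentIn_eq hy1
        have e2 : B = connectedComponentIn (Ω \ F) y := connectedComponentIn_eq hy2
        have : (z : ℂ) ∈ B := by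
          rw [e2, ← e1]
          exact mem_connectedComponentIn hzΩF
        exact ⟨z, this, rfl⟩
    have hxB : x ∈ B := mem_connectedComponentIn hx
    have hsep := hconn.isPreconnected (OnePoint.some '' B')
      (closure (OnePoint.some '' B'))ᶜ hU1 (isClosed_closure.isOpen_compl)
      (fun p hp => by
        by_cases h : p ∈ closure (OnePoint.some '' B')
        · exact Or.inl (hcl ⟨hp, h⟩)
        · exact Or.inr h)
      ⟨OnePoint.some ⟨x, hx.1⟩, (aux_some_mem Ω F).2 hx.2, ⟨⟨x, hx.1⟩, hxB, rfl⟩⟩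
      ⟨OnePoint.infty, aux_infty_mem Ω F, hinfty_not⟩
    obtain ⟨p, -, hp1, hp2⟩ := hsep
    exact hp2 (subset_closure hp1)
  · -- no holes → connected
    intro hnh
    refine ⟨⟨OnePoint.infty, aux_infty_mem Ω F⟩, ?_⟩
    apply isPreconnected_of_forall (OnePoint.infty : OnePoint Ω)
    intro y hy
    cases y with
    | infty =>
      exact ⟨{OnePoint.infty}, by simpa using aux_infty_mem Ω F, rfl, rfl,
        isPreconnected_singleton⟩
    | coe z =>
      have hzF : (z : ℂ) ∉ F := (aux_some_mem Ω F).1 hy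
      have hzΩF : (z : ℂ) ∈ Ω \ F := ⟨z.2, hzF⟩
      set B := connectedComponentIn (Ω \ F) (z : ℂ) with hBdef
      have hBsub : B ⊆ Ω \ F := connectedComponentIn_subset _ _
      set B' : Set Ω := {x : Ω | (x : ℂ) ∈ B} with hB'def
      have hzB : (z : ℂ) ∈ B := mem_connectedComponentIn hzΩF
      -- ∞ is in the closure of some '' B'
      have hinfty_cl : (OnePoint.infty : OnePoint Ω) ∈
          closure (OnePoint.some '' B') := by
        rw [mem_closure_iff]
        intro U hU hUinfty
        by_contra hne
        rw [not_nonempty_iff_eq_empty] at hne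
        have hUo := (OnePoint.isOpen_iff_of_mem hUinfty).1 hU
        have hB'K : B' ⊆ ((fun x : Ω => OnePoint.some x) ⁻¹' U)ᶜ := by
          intro w hw hwU
          exact (eq_empty_iff_forall_notMem.1 hne) (OnePoint.some w) ⟨hwU, w, hw, rfl⟩
        refine hnh B ⟨⟨(z : ℂ), hzΩF, rfl⟩,
          Subtype.val '' ((fun x : Ω => OnePoint.some x) ⁻¹' U)ᶜ,
          hUo.2.image continuous_subtype_val, ?_, ?_⟩
        · rintro w ⟨v, -, rfl⟩; exact v.2
        · intro w hw
          exact ⟨⟨w, (hBsub hw).1⟩, hB'K hw, rfl⟩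
      -- the connecting set
      refine ⟨insert OnePoint.infty (OnePoint.some '' B'), ?_, mem_insert _ _,
        Or.inr ⟨z, hzB, rfl⟩, ?_⟩
      · rintro p (rfl | ⟨w, hw, rfl⟩)
        · exact aux_infty_mem Ω F
        · exact (aux_some_mem Ω F).2 (hBsub hw).2
      · refine IsPreconnected.subset_closure
          (aux_preconn Ω (hBsub.trans diff_subset) isPreconnected_connectedComponentIn)
          (subset_insert _ _) ?_
        rintro p (rfl | hp)
        · exact hinfty_cl
        · exact subset_closure hp
end
end

section
/- Let Ω ⊆ ℂ be open and F ⊆ Ω an Arakelian set in Ω. Then for every open set U with F ⊆ U ⊆ Ω, there exists an open set V ⊆ Ω such that F ⊆ V ⊆ U and (Ω ∪ {α}) \ V is connected. -/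
open Topology Filter Set

noncomputable section

section Stmt4AuxSection

open OnePoint

variable {Y : Type*} [TopologicalSpace Y] [T2Space Y] [LocallyCompactSpace Y]
  [SigmaCompactSpace Y] [LocallyPathConnectedSpace Y]

namespace Stmt4Aux

variable {Y : Type*} [TopologicalSpace Y] [T2Space Y] [LocallyCompactSpace Y]
  [SigmaCompactSpace Y] [LocallyPathConnectedSpace Y]

/-- Main topological lemma: inside the one-point compactification of `Y`, if
`E = {∞} ∪ G` with `G` open, `E` connected and locally connected at `∞`, then any
closed `A` with `∞ ∈ A ⊆ E` is contained in a closed preconnected set `C ⊆ E`. -/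
theorem exists_good_closed {G : Set Y} (hG : IsOpen G)
    {E : Set (OnePoint Y)} (hE : E = insert ∞ (((↑) : Y → OnePoint Y) '' G))
    (hEconn : IsConnected E) (hEloc : ∀ U ∈ 𝓝 (∞ : OnePoint Y), ∃ W ∈ 𝓝 (∞ : OnePoint Y), W ⊆ U ∧ IsConnected (W ∩ E))
    {A : Set (OnePoint Y)} (hA : IsClosed A) (hAinf : (∞ : OnePoint Y) ∈ A) (hAE : A ⊆ E) :
    ∃ C : Set (OnePoint Y), IsClosed C ∧ IsPreconnected C ∧ (∞ : OnePoint Y) ∈ C ∧ A ⊆ C ∧ C ⊆ E := by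
  classical
  have hinfE : (∞ : OnePoint Y) ∈ E := by rw [hE]; exact mem_insert _ _
  have hGE : ((↑) : Y → OnePoint Y) '' G ⊆ E := by rw [hE]; exact subset_insert _ _
  have hmemE : ∀ x ∈ E, x ≠ (∞ : OnePoint Y) → ∃ y ∈ G, ((y : OnePoint Y) = x) := by
    intro x hx hne
    rw [hE] at hx
    rcases hx with h | h
    · exact absurd h hne
    · obtain ⟨y, hy, rfl⟩ := h; exact ⟨y, hy, rfl⟩
  -- compact exhaustion of Y and basic neighborhoods of ∞
  set K : CompactExhaustion Y := CompactExhaustion.choice Y with hK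
  set N : ℕ → Set (OnePoint Y) := fun m => (((↑) : Y → OnePoint Y) '' (K m))ᶜ with hNdef
  have hNopen : ∀ m, IsOpen (N m) := by
    intro m
    exact isOpen_compl_iff.mpr <| (OnePoint.isClosed_image_coe).mpr
      ⟨(K.isCompact m).isClosed, K.isCompact m⟩
  have hNinf : ∀ m, (∞ : OnePoint Y) ∈ N m := fun m => infty_notMem_image_coe
  have hNnhds : ∀ m, N m ∈ 𝓝 (∞ : OnePoint Y) := fun m => (hNopen m).mem_nhds (hNinf m)
  have hNanti : ∀ {m m' : ℕ}, m ≤ m' → N m' ⊆ N m := by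
    intro m m' hmm
    exact compl_subset_compl.mpr (image_mono (K.subset hmm))
  have hNbasis : ∀ S ∈ 𝓝 (∞ : OnePoint Y), ∃ m, N m ⊆ S := by
    intro S hS
    obtain ⟨s, ⟨hcl, hcomp⟩, hsub⟩ := (OnePoint.hasBasis_nhds_infty).mem_iff.mp hS
    obtain ⟨m, hm⟩ := K.exists_superset_of_isCompact hcomp
    refine ⟨m, fun x hx => hsub ?_⟩
    rcases eq_or_ne x ∞ with rfl | hne
    · exact Or.inr rfl
    · obtain ⟨y, rfl⟩ : ∃ y : Y, (y : OnePoint Y) = x := by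
        rcases x with _ | y
        · exact absurd rfl hne
        · exact ⟨y, rfl⟩
      refine Or.inl ⟨y, fun hy => hx ⟨y, hm hy, rfl⟩, rfl⟩
  -- construction of the nested neighborhoods h n
  have exStep : ∀ (m : ℕ) (s : Set (OnePoint Y)), s ∈ 𝓝 (∞ : OnePoint Y) →
      ∃ t, (t ∈ 𝓝 (∞ : OnePoint Y) ∧ IsConnected (t ∩ E)) ∧
        closure t ⊆ interior s ∧ t ⊆ N m := by
    intro m s hs
    have hop : IsOpen (interior s ∩ N m) := isOpen_interior.inter (hNopen m)
    have hmem : (∞ : OnePoint Y) ∈ interior s ∩ N m :=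
      ⟨mem_interior_iff_mem_nhds.mpr hs, hNinf m⟩
    obtain ⟨Z, hZcomp, hZint, hZsub⟩ := exists_compact_subset hop hmem
    obtain ⟨W, hWnhds, hWsub, hWconn⟩ := hEloc (interior Z) (isOpen_interior.mem_nhds hZint)
    refine ⟨W, ⟨hWnhds, hWconn⟩, ?_, ?_⟩
    · calc closure W ⊆ closure (interior Z) := closure_mono hWsub
        _ ⊆ Z := closure_minimal interior_subset hZcomp.isClosed
        _ ⊆ interior s := hZsub.trans inter_subset_left
    · exact fun x hx => (hZsub (interior_subset (hWsub hx))).2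
  choose! step hstep using exStep
  set f : ℕ → Set (OnePoint Y) := fun k => Nat.rec univ (fun k ih => step k ih) k with hfdef
  have hf0 : f 0 = univ := rfl
  have hfsucc : ∀ k, f (k + 1) = step k (f k) := fun k => rfl
  have hfkey : ∀ k, (f k ∈ 𝓝 (∞ : OnePoint Y) ∧ IsConnected (f k ∩ E)) ∧
      closure (f (k+1)) ⊆ interior (f k) ∧ f (k+1) ⊆ N k := by
    intro k
    induction k with
    | zero =>
        have hb : f 0 ∈ 𝓝 (∞ : OnePoint Y) ∧ IsConnected (f 0 ∩ E) := by
          rw [hf0]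
          exact ⟨univ_mem, by simpa [univ_inter] using hEconn⟩
        exact ⟨hb, (hstep 0 (f 0) hb.1).2⟩
    | succ k ih =>
        have hb := (hstep k (f k) ih.1.1)
        exact ⟨hb.1, (hstep (k+1) (f (k+1)) hb.1.1).2⟩
  set h : ℕ → Set (OnePoint Y) := fun n => f (n - 2) with hhdef
  have h_nhds : ∀ n, h n ∈ 𝓝 (∞ : OnePoint Y) := fun n => (hfkey (n-2)).1.1
  have h_conn : ∀ n, IsConnected (h n ∩ E) := fun n => (hfkey (n-2)).1.2
  have h_univ2 : h 2 = univ := hf0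
  have h_univ1 : h 1 = univ := hf0
  have h_univ0 : h 0 = univ := hf0
  have h_cl : ∀ n, closure (h (n+1)) ⊆ interior (h n) := by
    intro n
    match n with
    | 0 =>
        show closure (univ : Set (OnePoint Y)) ⊆ interior univ
        rw [closure_univ, interior_univ]
    | 1 =>
        show closure (univ : Set (OnePoint Y)) ⊆ interior univ
        rw [closure_univ, interior_univ]
    | (n+2) =>
        show closure (f ((n+3) - 2)) ⊆ interior (f ((n+2) - 2))
        exact (hfkey n).2.1
  have h_N : ∀ n, h (n+3) ⊆ N n := by
    intro n
    show f ((n+3) - 2) ⊆ N n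
    exact (hfkey n).2.2
  have h_succ : ∀ n, h (n+1) ⊆ h n :=
    fun n => (subset_closure.trans (h_cl n)).trans interior_subset
  have h_anti : ∀ {m n : ℕ}, m ≤ n → h n ⊆ h m := by
    intro m n hmn
    exact antitone_nat_of_succ_le (fun k => h_succ k) hmn
  have h_infm : ∀ n, (∞ : OnePoint Y) ∈ interior (h n) :=
    fun n => mem_interior_iff_mem_nhds.mpr (h_nhds n)
  have h_inf : ∀ n, (∞ : OnePoint Y) ∈ h n := fun n => interior_subset (h_infm n)
  -- single connecting step: from a point of `h (k+1) ∩ G` find a compact connected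
  -- set inside `interior (h k) ∩ G` reaching a point of `h (k+2) ∩ G`.
  have exTail : ∀ (k : ℕ) (q : OnePoint Y), q ∈ h (k+1) → q ∈ (((↑) : Y → OnePoint Y) '' G) →
      ∃ q', (q' ∈ h (k+2) ∧ q' ∈ (((↑) : Y → OnePoint Y) '' G)) ∧
        ∃ s : Set (OnePoint Y), IsCompact s ∧ IsPreconnected s ∧ q ∈ s ∧ q' ∈ s ∧
          s ⊆ interior (h k) ∧ s ⊆ (((↑) : Y → OnePoint Y) '' G) := by
    intro k q hqh hqG
    obtain ⟨y, hyG, rfl⟩ := hqG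
    set O : Set Y := (((↑) : Y → OnePoint Y) ⁻¹' (interior (h k))) ∩ G with hOdef
    have hOopen : IsOpen O := (isOpen_interior.preimage OnePoint.continuous_coe).inter hG
    have hyO : y ∈ O := ⟨(h_cl k) (subset_closure hqh), hyG⟩
    set P : Set Y := pathComponentIn O y with hPdef
    have hPopen : IsOpen P := hOopen.pathComponentIn y
    have hPO : P ⊆ O := pathComponentIn_subset
    have hPrelcl : closure P ∩ O ⊆ P := by
      intro z hz
      have hzO : z ∈ O := hz.2
      have hnb : pathComponentIn O z ∈ 𝓝 z :=
        (hOopen.pathComponentIn z).mem_nhds (mem_pathComponentIn_self hzO)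
      obtain ⟨w, hw1, hw2⟩ := mem_closure_iff_nhds.1 hz.1 _ hnb
      exact (hw2 : JoinedIn O y w).trans ((hw1 : JoinedIn O z w).symm)
    -- ∞ is in the closure of the image of P
    have hinfP : (∞ : OnePoint Y) ∈ closure (((↑) : Y → OnePoint Y) '' P) := by
      by_contra hc
      obtain ⟨⟨x0, hx0⟩, hDpre⟩ := h_conn (k+1)
      have hyP : y ∈ P := mem_pathComponentIn_self hyO
      have hcover : h (k+1) ∩ E ⊆ (((↑) : Y → OnePoint Y) '' P) ∪ (closure (((↑) : Y → OnePoint Y) '' P))ᶜ := by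
        rintro x ⟨hxh, hxE⟩
        by_cases hxcl : x ∈ closure (((↑) : Y → OnePoint Y) '' P)
        · left
          have hne : x ≠ (∞ : OnePoint Y) := by rintro rfl; exact hc hxcl
          obtain ⟨z, hzG, rfl⟩ := hmemE x hxE hne
          have hzO : z ∈ O := ⟨(h_cl k) (subset_closure hxh), hzG⟩
          have hzcl : z ∈ closure P := by
            have := (OnePoint.isOpenEmbedding_coe (X := Y)).isEmbedding.closure_eq_preimage_closure_image P
            rw [this]; exact hxcl
          exact ⟨z, hPrelcl ⟨hzcl, hzO⟩, rfl⟩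
        · exact Or.inr hxcl
      have h1 : (h (k+1) ∩ E ∩ (((↑) : Y → OnePoint Y) '' P)).Nonempty :=
        ⟨(y : OnePoint Y), ⟨hqh, hGE ⟨y, hyG, rfl⟩⟩, ⟨y, hyP, rfl⟩⟩
      have h2 : (h (k+1) ∩ E ∩ (closure (((↑) : Y → OnePoint Y) '' P))ᶜ).Nonempty :=
        ⟨∞, ⟨h_inf (k+1), hinfE⟩, hc⟩
      obtain ⟨x, hx1, hx2, hx3⟩ := hDpre _ _ (isOpenMap_coe _ hPopen) (isOpen_compl_iff.mpr isClosed_closure)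
        hcover h1 h2
      exact hx3 (subset_closure hx2)
    -- pick the next point in `h (k+2)`
    obtain ⟨q', hq2h, hqP2⟩ := mem_closure_iff_nhds.1 hinfP _ (h_nhds (k+2))
    obtain ⟨z', hzP2, rfl⟩ := hqP2
    have hz'O : z' ∈ O := hPO hzP2
    have hjoin : JoinedIn O y z' := hzP2
    obtain ⟨γ, hγ⟩ := hjoin
    refine ⟨(z' : OnePoint Y), ⟨hq2h, ⟨z', hz'O.2, rfl⟩⟩,
      ((↑) : Y → OnePoint Y) '' (range γ), ?_, ?_, ?_, ?_, ?_, ?_⟩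
    · exact (isCompact_range γ.continuous).image OnePoint.continuous_coe
    · exact ((isPreconnected_range γ.continuous).image _ OnePoint.continuous_coe.continuousOn)
    · exact ⟨y, ⟨0, γ.source⟩, rfl⟩
    · exact ⟨z', ⟨1, γ.target⟩, rfl⟩
    · rintro x ⟨t, ⟨u, rfl⟩, rfl⟩
      exact (hγ u).1
    · rintro x ⟨t, ⟨u, rfl⟩, rfl⟩
      exact ⟨γ u, (hγ u).2, rfl⟩
  have exCoe : ∀ x : OnePoint Y, x ≠ (∞ : OnePoint Y) → ∃ y : Y, (y : OnePoint Y) = x := by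
    intro x hx
    rcases x with _ | y
    · exact absurd rfl hx
    · exact ⟨y, rfl⟩
  -- tails: from any point of `h (m+1) ∩ G`, a closed preconnected subset of
  -- `E ∩ interior (h m)` containing the point and `∞`.
  have core : ∀ (m : ℕ) (q : OnePoint Y), q ∈ h (m+1) → q ∈ (((↑) : Y → OnePoint Y) '' G) →
      ∃ L : Set (OnePoint Y), IsClosed L ∧ IsPreconnected L ∧ q ∈ L ∧ (∞ : OnePoint Y) ∈ L ∧
        L ⊆ E ∧ L ⊆ interior (h m) := by
    intro m q hq hqG
    have exT : ∀ (k : ℕ) (x : {x : OnePoint Y // x ∈ h (k+1) ∧ x ∈ (((↑) : Y → OnePoint Y) '' G)}),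
        ∃ p : ({x : OnePoint Y // x ∈ h (k+2) ∧ x ∈ (((↑) : Y → OnePoint Y) '' G)} ×
            Set (OnePoint Y)),
          IsCompact p.2 ∧ IsPreconnected p.2 ∧ (x : OnePoint Y) ∈ p.2 ∧
            (p.1 : OnePoint Y) ∈ p.2 ∧ p.2 ⊆ interior (h k) ∧
            p.2 ⊆ (((↑) : Y → OnePoint Y) '' G) := by
      intro k x
      obtain ⟨q', hq', s, hs1, hs2, hs3, hs4, hs5, hs6⟩ := exTail k x x.2.1 x.2.2
      exact ⟨(⟨q', hq'⟩, s), hs1, hs2, hs3, hs4, hs5, hs6⟩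
    choose TF hT1 hT2 hT3 hT4 hT5 hT6 using exT
    set seq : ∀ k : ℕ, {x : OnePoint Y // x ∈ h (m+k+1) ∧ x ∈ (((↑) : Y → OnePoint Y) '' G)} :=
      fun k => Nat.rec ⟨q, hq, hqG⟩ (fun k ih => (TF (m+k) ih).1) k with hseqdef
    set σ : ℕ → Set (OnePoint Y) := fun k => (TF (m+k) (seq k)).2 with hσdef
    have hσcomp : ∀ k, IsCompact (σ k) := fun k => hT1 _ _
    have hσpre : ∀ k, IsPreconnected (σ k) := fun k => hT2 _ _
    have hσmem1 : ∀ k, (seq k : OnePoint Y) ∈ σ k := fun k => hT3 _ _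
    have hσmem2 : ∀ k, (seq (k+1) : OnePoint Y) ∈ σ k := fun k => hT4 _ _
    have hσint : ∀ k, σ k ⊆ interior (h (m+k)) := fun k => hT5 _ _
    have hσG : ∀ k, σ k ⊆ (((↑) : Y → OnePoint Y) '' G) := fun k => hT6 _ _
    have hq_mem : ∀ k, (seq k : OnePoint Y) ∈ h (m+k+1) := fun k => (seq k).2.1
    -- preconnectedness of the union of the chain
    have hacc : ∀ j, IsPreconnected (⋃ k ∈ Finset.range (j+1), σ k) := by
      intro j
      induction j with
      | zero => simpa using hσpre 0
      | succ j ih =>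
          have heq : (⋃ k ∈ Finset.range (j+1+1), σ k) =
              σ (j+1) ∪ (⋃ k ∈ Finset.range (j+1), σ k) := by
            rw [Finset.range_add_one, Finset.set_biUnion_insert]
          rw [heq]
          refine IsPreconnected.union ((seq (j+1) : OnePoint Y)) (hσmem1 (j+1)) ?_ (hσpre (j+1)) ih
          exact mem_biUnion (Finset.self_mem_range_succ j) (hσmem2 j)
    have hUeq : (⋃ k, σ k) = ⋃₀ (Set.range fun j => ⋃ k ∈ Finset.range (j+1), σ k) := by
      apply Subset.antisymm
      · intro t ht
        obtain ⟨k, hk⟩ := mem_iUnion.1 ht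
        exact ⟨_, ⟨k, rfl⟩, mem_biUnion (Finset.self_mem_range_succ k) hk⟩
      · rintro t ⟨s, ⟨j, rfl⟩, hts⟩
        obtain ⟨k, _, hk⟩ := mem_iUnion₂.1 hts
        exact mem_iUnion.2 ⟨k, hk⟩
    have hUpre : IsPreconnected (⋃ k, σ k) := by
      rw [hUeq]
      refine isPreconnected_sUnion ((seq 0 : OnePoint Y)) _ ?_ ?_
      · rintro s ⟨j, rfl⟩
        exact mem_biUnion (Finset.mem_range.2 (Nat.succ_pos j)) (hσmem1 0)
      · rintro s ⟨j, rfl⟩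
        exact hacc j
    have hinfU : (∞ : OnePoint Y) ∈ closure (⋃ k, σ k) := by
      rw [mem_closure_iff_nhds]
      intro t ht
      obtain ⟨m', hm'⟩ := hNbasis t ht
      refine ⟨(seq (m'+2) : OnePoint Y), hm' ?_, mem_iUnion.2 ⟨m'+2, hσmem1 (m'+2)⟩⟩
      have h1 : (seq (m'+2) : OnePoint Y) ∈ h ((m + m') + 3) := hq_mem (m'+2)
      exact hNanti (Nat.le_add_left m' m) (h_N (m+m') h1)
    refine ⟨insert (∞ : OnePoint Y) (⋃ k, σ k), ?_, ?_, ?_, ?_, ?_, ?_⟩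
    · -- closedness
      apply isClosed_of_closure_subset
      intro x hx
      by_contra hxL
      have hxinf : x ≠ (∞ : OnePoint Y) := fun hh => hxL (hh ▸ mem_insert _ _)
      obtain ⟨y0, rfl⟩ := exCoe x hxinf
      obtain ⟨m0, hm0⟩ := K.exists_mem y0
      set B : Set (OnePoint Y) := ((↑) : Y → OnePoint Y) '' (interior (K (m0+1))) with hBdef
      have hBopen : IsOpen B := isOpenMap_coe _ isOpen_interior
      have hxB : (y0 : OnePoint Y) ∈ B := ⟨y0, K.subset_interior_succ m0 hm0, rfl⟩
      have hσB : ∀ k, m0+4 ≤ m+k → Disjoint (σ k) B := by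
        intro k hk
        have h1 : σ k ⊆ N (m0+1) := by
          intro t ht
          exact h_N (m0+1) (h_anti (by omega : m0+1+3 ≤ m+k)
            (interior_subset (hσint k ht)))
        rw [disjoint_left]
        rintro t ht ⟨z, hz, rfl⟩
        exact h1 ht ⟨z, K.subset (by omega : m0+1 ≤ m0+1) (interior_subset hz), rfl⟩
      set Z : Set (OnePoint Y) := ⋃ k ∈ Finset.range (m0+4), σ k with hZdef
      have hZclosed : IsClosed Z := isClosed_biUnion_finset (fun i _ => (hσcomp i).isClosed)
      have hLZ : ∀ t ∈ insert (∞ : OnePoint Y) (⋃ k, σ k), t ∈ B → t ∈ Z := by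
        intro t htL htB
        rcases htL with rfl | htU
        · exact absurd htB infty_notMem_image_coe
        · obtain ⟨k, hk⟩ := mem_iUnion.1 htU
          by_cases hkk : k < m0+4
          · exact mem_biUnion (Finset.mem_range.2 hkk) hk
          · exact ((hσB k (by omega)).ne_of_mem hk htB rfl).elim
      have hsub : insert (∞ : OnePoint Y) (⋃ k, σ k) ⊆
          Z ∪ (insert (∞ : OnePoint Y) (⋃ k, σ k) \ B) := by
        intro t htL
        by_cases htB : t ∈ B
        · exact Or.inl (hLZ t htL htB)
        · exact Or.inr ⟨htL, htB⟩
      have hxZB := (closure_mono hsub) hx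
      rw [closure_union, hZclosed.closure_eq] at hxZB
      rcases hxZB with hxZ | hxcl
      · refine hxL (mem_insert_of_mem _ ?_)
        obtain ⟨k, _, hk⟩ := mem_iUnion₂.1 hxZ
        exact mem_iUnion.2 ⟨k, hk⟩
      · obtain ⟨t, htB, _, htnB⟩ := mem_closure_iff_nhds.1 hxcl B (hBopen.mem_nhds hxB)
        exact htnB htB
    · exact hUpre.subset_closure (subset_insert _ _)
        (insert_subset_iff.mpr ⟨hinfU, subset_closure⟩)
    · exact mem_insert_of_mem _ (mem_iUnion.2 ⟨0, hσmem1 0⟩)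
    · exact mem_insert _ _
    · exact insert_subset_iff.mpr ⟨hinfE, iUnion_subset (fun k => (hσG k).trans hGE)⟩
    · exact insert_subset_iff.mpr ⟨h_infm m,
        iUnion_subset fun k => (hσint k).trans (interior_mono (h_anti (Nat.le_add_right m k)))⟩
  -- pieces covering the annular parts of A
  have pieces : ∀ n : ℕ, ∃ Pc : Set (OnePoint Y), IsClosed Pc ∧ IsPreconnected Pc ∧
      (∞ : OnePoint Y) ∈ Pc ∧ (A ∩ (closure (h (n+1)) \ interior (h (n+2)))) ⊆ Pc ∧
      Pc ⊆ E ∧ Pc ⊆ h (n-1) := by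
    intro n
    set M := A ∩ (closure (h (n+1)) \ interior (h (n+2))) with hMdef
    have hMcomp : IsCompact M :=
      (hA.inter (isClosed_closure.sdiff isOpen_interior)).isCompact
    have hMsub : ∀ a ∈ M, a ∈ interior (h n) ∧ a ∈ (((↑) : Y → OnePoint Y) '' G) := by
      intro a ha
      have h1 : a ∈ interior (h n) := h_cl n ha.2.1
      have hane : a ≠ (∞ : OnePoint Y) := fun hh => ha.2.2 (hh ▸ h_infm (n+2))
      obtain ⟨y, hy, hya⟩ := hmemE a (hAE ha.1) hane
      exact ⟨h1, ⟨y, hy, hya⟩⟩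
    have hcov : ∀ a ∈ M, ∃ Bo piece : Set (OnePoint Y), IsOpen Bo ∧ a ∈ Bo ∧
        IsClosed piece ∧ IsPreconnected piece ∧ (∞ : OnePoint Y) ∈ piece ∧ Bo ⊆ piece ∧
        piece ⊆ E ∧ piece ⊆ h (n-1) := by
      intro a ha
      obtain ⟨hai, yG⟩ := hMsub a ha
      obtain ⟨y, hyG, rfl⟩ := yG
      set O : Set Y := (((↑) : Y → OnePoint Y) ⁻¹' (interior (h n))) ∩ G with hO2
      have hOopen : IsOpen O := (isOpen_interior.preimage OnePoint.continuous_coe).inter hG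
      have hyO : y ∈ O := ⟨hai, hyG⟩
      obtain ⟨Kc, hKc, hyKc, hKcO⟩ := exists_compact_subset hOopen hyO
      set P : Set Y := pathComponentIn (interior Kc) y with hP2
      have hPopen : IsOpen P := isOpen_interior.pathComponentIn y
      have hyP : y ∈ P := mem_pathComponentIn_self hyKc
      have hPKc : closure P ⊆ Kc :=
        closure_minimal (pathComponentIn_subset.trans interior_subset) hKc.isClosed
      have hdiskcomp : IsCompact (((↑) : Y → OnePoint Y) '' closure P) :=
        (hKc.of_isClosed_subset isClosed_closure hPKc).image OnePoint.continuous_coe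
      have hdiskpre : IsPreconnected (((↑) : Y → OnePoint Y) '' closure P) :=
        ((isPathConnected_pathComponentIn hyKc).isConnected.isPreconnected.closure).image _
          OnePoint.continuous_coe.continuousOn
      have hah : (y : OnePoint Y) ∈ h ((n-1)+1) := by
        rcases n with _ | n
        · rw [show (0:ℕ)-1+1 = 1 from rfl, h_univ1]; exact mem_univ _
        · exact interior_subset hai
      obtain ⟨L, hL1, hL2, hL3, hL4, hL5, hL6⟩ := core (n-1) _ hah ⟨y, hyG, rfl⟩
      refine ⟨((↑) : Y → OnePoint Y) '' P, ((↑) : Y → OnePoint Y) '' closure P ∪ L,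
        isOpenMap_coe _ hPopen, ⟨y, hyP, rfl⟩, hdiskcomp.isClosed.union hL1, ?_, Or.inr hL4,
        fun t ht => Or.inl (image_mono subset_closure ht), ?_, ?_⟩
      · exact IsPreconnected.union ((y : OnePoint Y)) ⟨y, subset_closure hyP, rfl⟩ hL3
          hdiskpre hL2
      · rintro t (⟨z, hz, rfl⟩ | htL)
        · exact hGE ⟨z, (hKcO (hPKc hz)).2, rfl⟩
        · exact hL5 htL
      · rintro t (⟨z, hz, rfl⟩ | htL)
        · exact h_anti (Nat.sub_le n 1) (interior_subset ((hKcO (hPKc hz)).1))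
        · exact (hL6.trans interior_subset) htL
    choose! Bo pc hBo1 hBo2 hpc1 hpc2 hpc3 hpc4 hpc5 hpc6 using hcov
    obtain ⟨s, hsM, hsfin, hscov⟩ := hMcomp.elim_finite_subcover_image
      (fun a ha => hBo1 a ha) (fun a ha => mem_biUnion ha (hBo2 a ha))
    refine ⟨insert (∞ : OnePoint Y) (⋃ a ∈ s, pc a), ?_, ?_, mem_insert _ _, ?_, ?_, ?_⟩
    · rw [insert_eq]
      exact isClosed_singleton.union (hsfin.isClosed_biUnion (fun i hi => hpc1 i (hsM hi)))
    · have hpre := isPreconnected_sUnion (∞ : OnePoint Y) (insert {(∞ : OnePoint Y)} (pc '' s))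
        (by
          rintro t (rfl | ⟨a, ha, rfl⟩)
          · exact mem_singleton _
          · exact hpc3 a (hsM ha))
        (by
          rintro t (rfl | ⟨a, ha, rfl⟩)
          · exact isPreconnected_singleton
          · exact hpc2 a (hsM ha))
      have : ⋃₀ (insert {(∞ : OnePoint Y)} (pc '' s)) =
          insert (∞ : OnePoint Y) (⋃ a ∈ s, pc a) := by
        rw [sUnion_insert, sUnion_image, insert_eq]
      rwa [this] at hpre
    · intro a' ha'
      obtain ⟨i, his, hBo⟩ := mem_iUnion₂.1 (hscov ha')
      exact mem_insert_of_mem _ (mem_biUnion his (hpc4 i (hsM his) hBo))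
    · exact insert_subset_iff.mpr ⟨hinfE, iUnion₂_subset fun i hi => hpc5 i (hsM hi)⟩
    · exact insert_subset_iff.mpr ⟨h_inf (n-1), iUnion₂_subset fun i hi => hpc6 i (hsM hi)⟩
  choose pieceF hP1 hP2 hP3 hP4 hP5 hP6 using pieces
  set C : Set (OnePoint Y) := ⋃ n, pieceF n with hCdef
  have hCinf : (∞ : OnePoint Y) ∈ C := mem_iUnion.2 ⟨0, hP3 0⟩
  have hCE : C ⊆ E := iUnion_subset hP5
  have hCpre : IsPreconnected C := by
    have hpre := isPreconnected_sUnion (∞ : OnePoint Y) (Set.range pieceF)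
      (by rintro t ⟨n, rfl⟩; exact hP3 n)
      (by rintro t ⟨n, rfl⟩; exact hP2 n)
    rwa [sUnion_range] at hpre
  have hAC : A ⊆ C := by
    intro a haA
    rcases eq_or_ne a (∞ : OnePoint Y) with rfl | hane
    · exact hCinf
    obtain ⟨y, rfl⟩ := exCoe a hane
    obtain ⟨m0, hm0⟩ := K.exists_mem y
    have hex : ∃ j, (y : OnePoint Y) ∉ h j :=
      ⟨m0+3, fun hmem => (h_N m0 hmem) ⟨y, hm0, rfl⟩⟩
    have hj0spec : (y : OnePoint Y) ∉ h (Nat.find hex) := Nat.find_spec hex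
    have hj0min : ∀ j, j < Nat.find hex → (y : OnePoint Y) ∈ h j :=
      fun j hj => not_not.1 (Nat.find_min hex hj)
    set j0 := Nat.find hex with hj0def
    have hj0ge : 3 ≤ j0 := by
      by_contra hlt
      push_neg at hlt
      have huniv : h j0 = univ := by
        interval_cases j0
        · exact h_univ0
        · exact h_univ1
        · exact h_univ2
      exact hj0spec (huniv ▸ mem_univ _)
    have e1 : (j0-2)+1 = j0-1 := by omega
    have e2 : (j0-2)+2 = j0 := by omega
    refine mem_iUnion.2 ⟨j0-2, hP4 (j0-2) ⟨haA, ?_, ?_⟩⟩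
    · rw [e1]
      exact subset_closure (hj0min (j0-1) (by omega))
    · rw [e2]
      exact fun hmem => hj0spec (interior_subset hmem)
  have hCclosed : IsClosed C := by
    apply isClosed_of_closure_subset
    intro x hx
    by_contra hxC
    have hxinf : x ≠ (∞ : OnePoint Y) := fun hh => hxC (hh ▸ hCinf)
    obtain ⟨y0, rfl⟩ := exCoe x hxinf
    obtain ⟨m0, hm0⟩ := K.exists_mem y0
    set B : Set (OnePoint Y) := ((↑) : Y → OnePoint Y) '' (interior (K (m0+1))) with hB2
    have hBopen : IsOpen B := isOpenMap_coe _ isOpen_interior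
    have hxB : (y0 : OnePoint Y) ∈ B := ⟨y0, K.subset_interior_succ m0 hm0, rfl⟩
    have hpB : ∀ n, m0+5 ≤ n → Disjoint (pieceF n) B := by
      intro n hn
      have h1 : pieceF n ⊆ N (m0+1) := by
        have h2 : h (n-1) ⊆ h ((m0+1)+3) := h_anti (show (m0+1)+3 ≤ n-1 by omega)
        exact fun t ht => h_N (m0+1) (h2 (hP6 n ht))
      rw [disjoint_left]
      rintro t ht ⟨z, hz, rfl⟩
      exact h1 ht ⟨z, interior_subset hz, rfl⟩
    set Z := ⋃ n ∈ Finset.range (m0+5), pieceF n with hZ2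
    have hZclosed : IsClosed Z := isClosed_biUnion_finset (fun i _ => hP1 i)
    have hCZ : ∀ t ∈ C, t ∈ B → t ∈ Z := by
      intro t htC htB
      obtain ⟨n, hn⟩ := mem_iUnion.1 htC
      by_cases hnn : n < m0+5
      · exact mem_biUnion (Finset.mem_range.2 hnn) hn
      · exact ((hpB n (by omega)).ne_of_mem hn htB rfl).elim
    have hsub : C ⊆ Z ∪ (C \ B) := by
      intro t htC
      by_cases htB : t ∈ B
      · exact Or.inl (hCZ t htC htB)
      · exact Or.inr ⟨htC, htB⟩
    have hxZB := (closure_mono hsub) hx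
    rw [closure_union, hZclosed.closure_eq] at hxZB
    rcases hxZB with hxZ | hxcl
    · obtain ⟨n, _, hn⟩ := mem_iUnion₂.1 hxZ
      exact hxC (mem_iUnion.2 ⟨n, hn⟩)
    · obtain ⟨t, htB, _, htnB⟩ := mem_closure_iff_nhds.1 hxcl B (hBopen.mem_nhds hxB)
      exact htnB htB
  exact ⟨C, hCclosed, hCpre, hCinf, hAC, hCE⟩

end Stmt4Aux

private theorem stmt4' (Ω F : Set ℂ) (hΩ : IsOpen Ω)
    (hFΩ : F ⊆ Ω) (hFcl : IsClosed ((fun x : Ω => (x : ℂ)) ⁻¹' F))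
    (hEconn : IsConnected ((OnePoint.some '' {x : Ω | (x : ℂ) ∈ F})ᶜ))
    (hEloc : ∀ U ∈ 𝓝 (OnePoint.infty : OnePoint Ω), ∃ W ∈ 𝓝 (OnePoint.infty : OnePoint Ω),
      W ⊆ U ∧ IsConnected (W ∩ (OnePoint.some '' {x : Ω | (x : ℂ) ∈ F})ᶜ)) :
    ∀ U : Set ℂ, IsOpen U → F ⊆ U → U ⊆ Ω →
      ∃ V : Set ℂ, IsOpen V ∧ V ⊆ Ω ∧ F ⊆ V ∧ V ⊆ U ∧
        IsConnected ((OnePoint.some '' {x : Ω | (x : ℂ) ∈ V})ᶜ) := by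
  intro U hU hFU hUΩ
  haveI : LocallyCompactSpace ↥Ω := hΩ.locallyCompactSpace
  haveI : LocallyPathConnectedSpace ↥Ω := hΩ.locallyPathConnectedSpace
  set Fs : Set ↥Ω := {x : ↥Ω | (x : ℂ) ∈ F} with hFsdef
  set Us : Set ↥Ω := {x : ↥Ω | (x : ℂ) ∈ U} with hUsdef
  set G : Set ↥Ω := Fsᶜ with hGdef
  have hG : IsOpen G := isOpen_compl_iff.mpr hFcl
  have hE : ((((↑) : ↥Ω → OnePoint ↥Ω)) '' Fs)ᶜ =
      insert (OnePoint.infty : OnePoint ↥Ω) (((↑) : ↥Ω → OnePoint ↥Ω) '' G) := by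
    rw [OnePoint.compl_image_coe, union_singleton]
  set A : Set (OnePoint ↥Ω) := ((((↑) : ↥Ω → OnePoint ↥Ω)) '' Us)ᶜ with hAdef
  have hAcl : IsClosed A := by
    rw [hAdef, isClosed_compl_iff]
    exact OnePoint.isOpen_image_coe.mpr (hU.preimage continuous_subtype_val)
  have hAinf : (OnePoint.infty : OnePoint ↥Ω) ∈ A := OnePoint.infty_notMem_image_coe
  have hAE : A ⊆ ((((↑) : ↥Ω → OnePoint ↥Ω)) '' Fs)ᶜ :=
    compl_subset_compl.mpr (image_mono (fun x hx => hFU hx))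
  rw [hE] at hAE hEconn hEloc
  obtain ⟨C, hCcl, hCpre, hCinf, hAC, hCE⟩ :=
    Stmt4Aux.exists_good_closed hG rfl hEconn hEloc hAcl hAinf hAE
  refine ⟨Subtype.val '' ((((↑) : ↥Ω → OnePoint ↥Ω)) ⁻¹' Cᶜ), ?_, ?_, ?_, ?_, ?_⟩
  · exact hΩ.isOpenMap_subtype_val _ (hCcl.isOpen_compl.preimage OnePoint.continuous_coe)
  · exact Subtype.coe_image_subset _ _
  · intro z hz
    refine ⟨⟨z, hFΩ hz⟩, ?_, rfl⟩
    intro hmem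
    have := hCE hmem
    rcases this with hh | ⟨w, hwG, hwz⟩
    · exact OnePoint.coe_ne_infty _ hh
    · exact hwG (by
        have : w = ⟨z, hFΩ hz⟩ := OnePoint.coe_injective hwz
        rw [this]; exact hz)
  · rintro z ⟨x, hx, rfl⟩
    by_contra hzU
    exact hx (hAC (fun hmem => hzU (by
      obtain ⟨w, hw, hwx⟩ := hmem
      have : w = x := OnePoint.coe_injective hwx
      exact this ▸ hw)))
  · have hset : {x : ↥Ω | (x : ℂ) ∈ Subtype.val '' ((((↑) : ↥Ω → OnePoint ↥Ω)) ⁻¹' Cᶜ)} =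
        (((↑) : ↥Ω → OnePoint ↥Ω)) ⁻¹' Cᶜ := by
      ext x
      constructor
      · rintro ⟨w, hw, hwx⟩
        have : w = x := Subtype.val_injective hwx
        exact this ▸ hw
      · intro hx
        exact ⟨x, hx, rfl⟩
    have himg : (((((↑) : ↥Ω → OnePoint ↥Ω)) '' ((((↑) : ↥Ω → OnePoint ↥Ω)) ⁻¹' Cᶜ))ᶜ) = C := by
      rw [image_preimage_eq_inter_range, compl_inter, compl_compl, OnePoint.compl_range_coe]
      exact union_eq_self_of_subset_right (singleton_subset_iff.mpr hCinf)
    have : (OnePoint.some '' {x : ↥Ω | (x : ℂ) ∈ Subtype.val ''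
        ((((↑) : ↥Ω → OnePoint ↥Ω)) ⁻¹' Cᶜ)})ᶜ = C := by
      rw [hset] at *
      exact himg
    rw [this]
    exact ⟨⟨_, hCinf⟩, hCpre⟩

end Stmt4AuxSection

theorem stmt4 (Ω F : Set ℂ) (hΩ : IsOpen Ω) (hF : ArakelianIn Ω F) :
    ∀ U : Set ℂ, IsOpen U → F ⊆ U → U ⊆ Ω →
      ∃ V : Set ℂ, IsOpen V ∧ V ⊆ Ω ∧ F ⊆ V ∧ V ⊆ U ∧
        IsConnected (ocCompl Ω V) := by
  obtain ⟨⟨hFΩ, hFcl⟩, hEconn, hEloc⟩ := hF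
  exact stmt4' Ω F hΩ hFΩ hFcl hEconn hEloc
end
end

section
/- Let Ω ⊆ ℂ be open and F ⊆ Ω relatively closed. Suppose that for every open set U with F ⊆ U ⊆ Ω there exists an open set V ⊆ Ω with F ⊆ V ⊆ U and (Ω ∪ {α}) \ V connected. Then F is an Arakelian set in Ω. -/
open Topology Filter Set

noncomputable section

namespace Arakelian5

variable {Ω : Set ℂ}

/-- image of a subset of `Ω` inside the one point compactification of `Ω`. -/
def img (Ω S : Set ℂ) : Set (OnePoint Ω) := OnePoint.some '' {x : Ω | (x : ℂ) ∈ S}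

lemma ocCompl_eq_compl_img (S : Set ℂ) : ocCompl Ω S = (img Ω S)ᶜ := rfl

lemma infty_not_mem_img (S : Set ℂ) : OnePoint.infty ∉ img Ω S :=
  OnePoint.infty_notMem_image_coe

lemma infty_mem_ocCompl (S : Set ℂ) : OnePoint.infty ∈ ocCompl Ω S := infty_not_mem_img S

lemma coe_mem_img_iff {S : Set ℂ} {q : Ω} :
    (OnePoint.some q) ∈ img Ω S ↔ (q : ℂ) ∈ S := by
  constructor
  · rintro ⟨p, hp, hpq⟩
    cases OnePoint.coe_injective hpq
    exact hp
  · intro hq; exact ⟨q, hq, rfl⟩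

lemma img_mono {S T : Set ℂ} (h : S ⊆ T) : img Ω S ⊆ img Ω T :=
  Set.image_mono (fun _ hx => h hx)

lemma img_union (S T : Set ℂ) : img Ω (S ∪ T) = img Ω S ∪ img Ω T := by
  unfold img
  rw [show {x : Ω | (x : ℂ) ∈ S ∪ T} = {x : Ω | (x : ℂ) ∈ S} ∪ {x : Ω | (x : ℂ) ∈ T} from rfl,
    Set.image_union]

lemma setOf_eq_preimage (S : Set ℂ) :
    {x : Ω | (x : ℂ) ∈ S} = (Subtype.val : Ω → ℂ) ⁻¹' S := rfl

lemma isOpen_img {S : Set ℂ} (hS : IsOpen S) : IsOpen (img Ω S) := by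
  apply OnePoint.isOpen_image_coe.2
  rw [setOf_eq_preimage]
  exact hS.preimage continuous_subtype_val

lemma isCompact_pre {S : Set ℂ} (hS : IsCompact S) (hSΩ : S ⊆ Ω) :
    IsCompact {x : Ω | (x : ℂ) ∈ S} := by
  rw [setOf_eq_preimage, Subtype.isCompact_iff, Set.image_preimage_eq_inter_range,
    Subtype.range_coe, Set.inter_eq_self_of_subset_left hSΩ]
  exact hS

lemma isClosed_img {S : Set ℂ} (hS : IsCompact S) (hSΩ : S ⊆ Ω) : IsClosed (img Ω S) := by
  apply OnePoint.isClosed_image_coe.2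
  refine ⟨?_, isCompact_pre hS hSΩ⟩
  rw [setOf_eq_preimage]
  exact hS.isClosed.preimage continuous_subtype_val

lemma isCompact_img {S : Set ℂ} (hS : IsCompact S) (hSΩ : S ⊆ Ω) : IsCompact (img Ω S) :=
  (isCompact_pre hS hSΩ).image OnePoint.continuous_coe

lemma closure_img_subset {S T : Set ℂ} (hST : S ⊆ T) (hT : IsCompact T) (hTΩ : T ⊆ Ω) :
    closure (img Ω S) ⊆ img Ω T :=
  closure_minimal (img_mono hST) (isClosed_img hT hTΩ)

lemma isPreconnected_img {S : Set ℂ} (hS : IsPreconnected S) (hSΩ : S ⊆ Ω) :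
    IsPreconnected (img Ω S) := by
  have h1 : IsPreconnected {x : Ω | (x : ℂ) ∈ S} := by
    rw [← Topology.IsInducing.subtypeVal.isPreconnected_image]
    rw [setOf_eq_preimage, Set.image_preimage_eq_inter_range, Subtype.range_coe,
      Set.inter_eq_self_of_subset_left hSΩ]
    exact hS
  exact h1.image _ OnePoint.continuous_coe.continuousOn

/-- pull a subset of the compactification not containing `∞` down to `ℂ`. -/
def dwn (D : Set (OnePoint Ω)) : Set ℂ := Subtype.val '' (OnePoint.some ⁻¹' D)

lemma mem_dwn {D : Set (OnePoint Ω)} {z : ℂ} :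
    z ∈ dwn D ↔ ∃ hz : z ∈ Ω, OnePoint.some (⟨z, hz⟩ : Ω) ∈ D := by
  constructor
  · rintro ⟨⟨w, hw⟩, hwD, rfl⟩; exact ⟨hw, hwD⟩
  · rintro ⟨hz, hD⟩; exact ⟨⟨z, hz⟩, hD, rfl⟩

lemma dwn_subset {D : Set (OnePoint Ω)} : dwn D ⊆ Ω := by
  rintro z ⟨⟨w, hw⟩, _, rfl⟩; exact hw

lemma mem_dwn_of_coe {D : Set (OnePoint Ω)} {q : Ω} (h : OnePoint.some q ∈ D) :
    (q : ℂ) ∈ dwn D := ⟨q, h, rfl⟩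

lemma isPreconnected_dwn {D : Set (OnePoint Ω)} (hD : IsPreconnected D)
    (hinf : OnePoint.infty ∉ D) : IsPreconnected (dwn D) := by
  have hsub : D ⊆ Set.range (OnePoint.some : Ω → OnePoint Ω) := by
    intro p hp
    by_contra hr
    have : p = OnePoint.infty := OnePoint.notMem_range_coe_iff.1 hr
    exact hinf (this ▸ hp)
  have hid : OnePoint.some '' (OnePoint.some ⁻¹' D) = D :=
    Set.image_preimage_eq_of_subset hsub
  have h2 : IsPreconnected (OnePoint.some ⁻¹' D : Set Ω) := by
    rw [← OnePoint.isOpenEmbedding_coe.isInducing.isPreconnected_image, hid]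
    exact hD
  exact h2.image _ continuous_subtype_val.continuousOn

lemma infty_mem_closure_img {S : Set ℂ} (hSΩ : S ⊆ Ω)
    (hnc : ∀ L : Set ℂ, IsCompact L → L ⊆ Ω → ¬ S ⊆ L) :
    OnePoint.infty ∈ closure (img Ω S) := by
  rw [mem_closure_iff_nhds_basis OnePoint.hasBasis_nhds_infty]
  rintro s ⟨hscl, hscpt⟩
  have hL : IsCompact (Subtype.val '' s) := hscpt.image continuous_subtype_val
  have hLΩ : Subtype.val '' s ⊆ Ω := Subtype.coe_image_subset Ω s
  obtain ⟨z, hzS, hzL⟩ := Set.not_subset.1 (hnc _ hL hLΩ)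
  refine ⟨OnePoint.some ⟨z, hSΩ hzS⟩, coe_mem_img_iff.2 hzS, Or.inl ⟨⟨z, hSΩ hzS⟩, ?_, rfl⟩⟩
  intro hmem
  exact hzL ⟨⟨z, hSΩ hzS⟩, hmem, rfl⟩



/-- Šura-Bura style boundary bumping: in a compact preconnected set `X` (ambient T2),
the connected component of `x` in `X \ W` (`W` open) meets the closure of `X ∩ W`,
provided the latter is nonempty. -/
lemma sura_bura {Y : Type*} [TopologicalSpace Y] [T2Space Y] {X W : Set Y}
    (hXc : IsCompact X) (hXconn : IsPreconnected X) (hW : IsOpen W)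
    (hne : (X ∩ W).Nonempty) {x : Y} (hx : x ∈ X \ W) :
    (connectedComponentIn (X \ W) x ∩ closure (X ∩ W)).Nonempty := by
  by_contra hempty
  rw [Set.not_nonempty_iff_eq_empty] at hempty
  have hAc : IsCompact (X \ W) := hXc.inter_right hW.isClosed_compl
  haveI : CompactSpace (X \ W : Set Y) := isCompact_iff_compactSpace.1 hAc
  set x' : (X \ W : Set Y) := ⟨x, hx⟩ with hx'
  have hcomp : connectedComponentIn (X \ W) x = Subtype.val '' connectedComponent x' :=
    connectedComponentIn_eq_image hx
  set G' : Set (X \ W : Set Y) := Subtype.val ⁻¹' (closure (X ∩ W)) with hG'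
  have hG'cl : IsClosed G' := isClosed_closure.preimage continuous_subtype_val
  have hG'c : IsCompact G' := hG'cl.isCompact
  have hdisj : connectedComponent x' ∩ G' = ∅ := by
    rw [Set.eq_empty_iff_forall_notMem]
    rintro a ⟨ha1, ha2⟩
    have : (a : Y) ∈ connectedComponentIn (X \ W) x ∩ closure (X ∩ W) := by
      exact ⟨hcomp ▸ ⟨a, ha1, rfl⟩, ha2⟩
    rw [hempty] at this
    exact this
  have hcover : G' ⊆ ⋃ (Z : {Z : Set (X \ W : Set Y) // IsClopen Z ∧ x' ∈ Z}), (↑Z)ᶜ := by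
    intro a haG
    by_contra hna
    simp only [Set.mem_iUnion, Set.mem_compl_iff, not_exists, not_not] at hna
    have : a ∈ connectedComponent x' := by
      rw [connectedComponent_eq_iInter_isClopen x']
      exact Set.mem_iInter.2 fun Z => hna Z
    exact (Set.eq_empty_iff_forall_notMem.1 hdisj a) ⟨this, haG⟩
  obtain ⟨t, ht⟩ := hG'c.elim_finite_subcover _ (fun Z => Z.2.1.1.isOpen_compl) hcover
  set Q : Set (X \ W : Set Y) := ⋂ Z ∈ t, (Z : {Z : Set (X \ W : Set Y) // IsClopen Z ∧ x' ∈ Z}).1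
    with hQdef
  have hQclopen : IsClopen Q := isClopen_biInter_finset (fun Z _ => Z.2.1)
  have hxQ : x' ∈ Q := Set.mem_iInter₂.2 fun Z _ => Z.2.2
  have hQG : Q ∩ G' = ∅ := by
    rw [Set.eq_empty_iff_forall_notMem]
    rintro a ⟨haQ, haG⟩
    obtain ⟨Z, hZt, hZa⟩ := Set.mem_iUnion₂.1 (ht haG)
    exact hZa (Set.mem_iInter₂.1 haQ Z hZt)
  -- push to the ambient space
  set Qy : Set Y := Subtype.val '' Q with hQy
  have hQycl : IsClosed Qy :=
    ((hQclopen.1.isCompact).image continuous_subtype_val).isClosed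
  obtain ⟨O, hOopen, hOQ⟩ := isOpen_induced_iff.1 hQclopen.2
  have hQyeq : Qy = X ∩ (O ∩ (closure (X ∩ W))ᶜ) := by
    apply Set.Subset.antisymm
    · rintro q ⟨a, haQ, rfl⟩
      refine ⟨a.2.1, ?_, ?_⟩
      · rw [← hOQ] at haQ; exact haQ
      · intro hcl
        exact (Set.eq_empty_iff_forall_notMem.1 hQG a) ⟨haQ, hcl⟩
    · rintro z ⟨hzX, hzO, hzcl⟩
      have hzW : z ∉ W := fun hzW => hzcl (subset_closure ⟨hzX, hzW⟩)
      refine ⟨⟨z, hzX, hzW⟩, ?_, rfl⟩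
      rw [← hOQ]; exact hzO
  -- contradiction with preconnectedness of X
  have hu : IsOpen (O ∩ (closure (X ∩ W))ᶜ) := hOopen.inter isClosed_closure.isOpen_compl
  have hv : IsOpen Qyᶜ := hQycl.isOpen_compl
  have hcov : X ⊆ (O ∩ (closure (X ∩ W))ᶜ) ∪ Qyᶜ := by
    intro z hz
    by_cases hzQ : z ∈ Qy
    · left; rw [hQyeq] at hzQ; exact hzQ.2
    · right; exact hzQ
  have hne1 : (X ∩ (O ∩ (closure (X ∩ W))ᶜ)).Nonempty := by
    refine ⟨x, hx.1, ?_⟩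
    have : x ∈ Qy := ⟨x', hxQ, rfl⟩
    rw [hQyeq] at this; exact this.2
  have hne2 : (X ∩ Qyᶜ).Nonempty := by
    obtain ⟨y, hy⟩ := hne
    refine ⟨y, hy.1, fun hyQ => ?_⟩
    obtain ⟨a, _, rfl⟩ := hyQ
    exact a.2.2 hy.2
  obtain ⟨z, hzX, hzu, hzv⟩ := hXconn _ _ hu hv hcov hne1 hne2
  exact hzv (by rw [hQyeq]; exact ⟨hzX, hzu⟩)


variable {Ω : Set ℂ}

lemma hole_meets_ring (hΩ : IsOpen Ω) {E V O L₀ : Set ℂ}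
    (hV : IsOpen V) (hX : IsConnected (ocCompl Ω V))
    (hO : IsOpen O) (hOc : IsCompact (closure O)) (hOΩ : closure O ⊆ Ω)
    (hEVO : E ⊆ V ∪ O) (hL₀ : IsCompact L₀) (hL₀Ω : L₀ ⊆ Ω)
    {x : ℂ} (hxΩ : x ∈ Ω) (hxV : x ∉ V) (hxO : x ∉ closure O)
    (hCL : connectedComponentIn (Ω \ E) x ⊆ L₀) (hxE : x ∈ Ω \ E) :
    ∃ c, c ∈ connectedComponentIn (Ω \ E) x ∧ c ∈ closure O \ O ∧ c ∉ V := by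
  haveI : LocallyCompactSpace Ω := hΩ.locallyCompactSpace
  obtain ⟨L, hLc, hsubL, hLΩ⟩ :=
    exists_compact_between (hL₀.union hOc) hΩ (Set.union_subset hL₀Ω hOΩ)
  set X := ocCompl Ω V with hXdef
  have hXclosed : IsClosed X := (isOpen_img hV).isClosed_compl
  have hXcpt : IsCompact X := hXclosed.isCompact
  set W : Set (OnePoint Ω) := img Ω O ∪ (img Ω L)ᶜ with hWdef
  have hWopen : IsOpen W := (isOpen_img hO).union (isClosed_img hLc hLΩ).isOpen_compl
  have hinfW : OnePoint.infty ∈ X ∩ W :=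
    ⟨infty_mem_ocCompl V, Or.inr (infty_not_mem_img L)⟩
  set xq : Ω := ⟨x, hxΩ⟩ with hxq
  have hxX : OnePoint.some xq ∈ X \ W := by
    constructor
    · intro hmem
      exact hxV (coe_mem_img_iff.1 hmem)
    · rintro (hmem | hmem)
      · exact hxO (subset_closure (coe_mem_img_iff.1 hmem))
      · exact hmem (coe_mem_img_iff.2 (interior_subset
          (hsubL (Or.inl (hCL (mem_connectedComponentIn hxE))))))
  obtain ⟨w, hwD, hwcl⟩ := sura_bura hXcpt hX.2 hWopen ⟨_, hinfW⟩ hxX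
  set D := connectedComponentIn (X \ W) (OnePoint.some xq) with hDdef
  have hDsub : D ⊆ X \ W := connectedComponentIn_subset _ _
  have hinfD : OnePoint.infty ∉ D := fun hmem => (hDsub hmem).2 (Or.inr (infty_not_mem_img L))
  have hdwn : dwn D ⊆ Ω \ E := by
    intro z hz
    obtain ⟨hzΩ, hzD⟩ := mem_dwn.1 hz
    obtain ⟨hzX, hzW⟩ := hDsub hzD
    have hzV : z ∉ V := fun hzV => hzX (coe_mem_img_iff.2 hzV)
    have hzO : z ∉ O := fun hzO => hzW (Or.inl (coe_mem_img_iff.2 hzO))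
    exact ⟨hzΩ, fun hzE => (hEVO hzE).elim hzV hzO⟩
  have hDconn : IsPreconnected D := isPreconnected_connectedComponentIn
  have hdconn : IsPreconnected (dwn D) := isPreconnected_dwn hDconn hinfD
  have hxdwn : x ∈ dwn D := mem_dwn_of_coe (mem_connectedComponentIn hxX)
  have hdC : dwn D ⊆ connectedComponentIn (Ω \ E) x :=
    hdconn.subset_connectedComponentIn hxdwn hdwn
  have hwrange : w ∈ Set.range (OnePoint.some : Ω → OnePoint Ω) := by
    by_contra hr
    exact hinfD ((OnePoint.notMem_range_coe_iff.1 hr) ▸ hwD)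
  obtain ⟨q, rfl⟩ := hwrange
  have hqdwn : (q : ℂ) ∈ dwn D := mem_dwn_of_coe hwD
  have hwcl2 : (OnePoint.some q) ∈ closure (img Ω O) ∪ closure ((img Ω L)ᶜ) := by
    have h1 : closure (X ∩ W) ⊆ closure (img Ω O ∪ (img Ω L)ᶜ) :=
      closure_mono Set.inter_subset_right
    have h2 := h1 hwcl
    rwa [closure_union] at h2
  rcases hwcl2 with hcase | hcase
  · -- w lands on the ring
    have hqclO : (q : ℂ) ∈ closure O :=
      coe_mem_img_iff.1 (closure_img_subset subset_closure hOc hOΩ hcase)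
    refine ⟨(q : ℂ), hdC hqdwn, ⟨hqclO, ?_⟩, ?_⟩
    · intro hqO
      exact (hDsub hwD).2 (Or.inl (coe_mem_img_iff.2 hqO))
    · intro hqV
      exact (hDsub hwD).1 (coe_mem_img_iff.2 hqV)
  · -- impossible: w is in the interior of img L
    exfalso
    rw [closure_compl] at hcase
    apply hcase
    have hqint : (q : ℂ) ∈ interior L := hsubL (Or.inl (hCL (hdC hqdwn)))
    have : OnePoint.some q ∈ img Ω (interior L) := coe_mem_img_iff.2 hqint
    exact interior_maximal (img_mono interior_subset) (isOpen_img isOpen_interior) this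
lemma exists_escape_seq (hΩ : IsOpen Ω) {Bad : Set ℂ} (hBadΩ : Bad ⊆ Ω)
    (hcon : ∀ M : Set ℂ, IsCompact M → M ⊆ Ω → ∃ z ∈ Bad, z ∉ M)
    {C₀ : Set ℂ} (hC₀ : IsCompact C₀) (hC₀Ω : C₀ ⊆ Ω)
    (Lz : ℂ → Set ℂ) (hLz : ∀ z ∈ Bad, IsCompact (Lz z) ∧ Lz z ⊆ Ω) :
    ∃ x : ℕ → ℂ, (∀ n, x n ∈ Bad) ∧ (∀ n, x n ∉ C₀) ∧
      (∀ n m, n < m → x m ∉ Lz (x n)) ∧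
      (∀ M : Set ℂ, IsCompact M → M ⊆ Ω → {n | x n ∈ M}.Finite) := by
  haveI : LocallyCompactSpace Ω := hΩ.locallyCompactSpace
  set exh := CompactExhaustion.choice Ω with hexh
  choose z hzBad hzM using hcon
  have himg : ∀ n : ℕ, IsCompact (Subtype.val '' (exh n : Set Ω)) ∧
      Subtype.val '' (exh n : Set Ω) ⊆ Ω :=
    fun n => ⟨(exh.isCompact n).image continuous_subtype_val, Subtype.coe_image_subset _ _⟩
  let MM : ℕ → {M : Set ℂ // IsCompact M ∧ M ⊆ Ω} := fun n => Nat.rec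
    ⟨C₀ ∪ Subtype.val '' (exh 0 : Set Ω),
      hC₀.union (himg 0).1, Set.union_subset hC₀Ω (himg 0).2⟩
    (fun n p => ⟨p.1 ∪ Lz (z p.1 p.2.1 p.2.2) ∪ Subtype.val '' (exh (n+1) : Set Ω),
      (p.2.1.union (hLz _ (hzBad p.1 p.2.1 p.2.2)).1).union (himg (n+1)).1,
      Set.union_subset (Set.union_subset p.2.2 (hLz _ (hzBad p.1 p.2.1 p.2.2)).2)
        (himg (n+1)).2⟩) n
  set x : ℕ → ℂ := fun n => z (MM n).1 (MM n).2.1 (MM n).2.2 with hx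
  have hxBad : ∀ n, x n ∈ Bad := fun n => hzBad _ _ _
  have hxM : ∀ n, x n ∉ (MM n).1 := fun n => hzM _ _ _
  have hsucc : ∀ n, (MM n).1 ∪ Lz (x n) ⊆ (MM (n+1)).1 := by
    intro n
    have : (MM (n+1)).1 = (MM n).1 ∪ Lz (x n) ∪ Subtype.val '' (exh (n+1) : Set Ω) := rfl
    rw [this]
    exact Set.subset_union_left
  have hmono : ∀ n m, n ≤ m → (MM n).1 ⊆ (MM m).1 := by
    intro n m hnm
    induction m with
    | zero => rw [Nat.le_zero.1 hnm]
    | succ m ih =>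
      rcases Nat.lt_or_ge n (m+1) with hlt | hge
      · exact (ih (Nat.lt_succ_iff.1 hlt)).trans
          ((Set.subset_union_left).trans (hsucc m))
      · rw [Nat.le_antisymm hnm hge]
  have hexhsub : ∀ n, Subtype.val '' (exh n : Set Ω) ⊆ (MM n).1 := by
    intro n
    cases n with
    | zero => exact Set.subset_union_right
    | succ n => exact Set.subset_union_right
  refine ⟨x, hxBad, ?_, ?_, ?_⟩
  · intro n hmem
    exact hxM n (hmono 0 n (Nat.zero_le n) (Set.subset_union_left hmem))
  · intro n m hnm hmem
    exact hxM m (hmono (n+1) m hnm ((hsucc n) (Or.inr hmem)))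
  · intro M hM hMΩ
    have hpre : IsCompact {x : Ω | (x : ℂ) ∈ M} := isCompact_pre hM hMΩ
    obtain ⟨k, hk⟩ := exh.exists_superset_of_isCompact hpre
    have hMk : M ⊆ Subtype.val '' (exh k : Set Ω) := by
      intro m hm
      exact ⟨⟨m, hMΩ hm⟩, hk hm, rfl⟩
    apply Set.Finite.subset (Set.finite_Iio k)
    intro n hn
    by_contra hge
    have hkn : k ≤ n := le_of_not_gt hge
    exact hxM n (hmono k n hkn (hexhsub k (hMk hn)))

lemma bad_bounded (hΩ : IsOpen Ω) {F : Set ℂ} (hFΩ : F ⊆ Ω)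
    (h : ∀ U : Set ℂ, IsOpen U → F ⊆ U → U ⊆ Ω →
      ∃ V : Set ℂ, IsOpen V ∧ V ⊆ Ω ∧ F ⊆ V ∧ V ⊆ U ∧ IsConnected (ocCompl Ω V))
    {K : Set ℂ} (hK : IsCompact K) (hKΩ : K ⊆ Ω) (hE : IsOpen (Ω \ (K ∪ F))) :
    ∃ L, IsCompact L ∧ L ⊆ Ω ∧ holesUnion Ω (K ∪ F) ⊆ L := by
  by_contra hcon
  push_neg at hcon
  set E := K ∪ F with hEdef
  set Bad := holesUnion Ω E with hBadDef
  have hBadsub : Bad ⊆ Ω \ E := by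
    rintro w ⟨B, hB, hwB⟩
    obtain ⟨⟨x₀, _, hBx₀⟩, _⟩ := hB
    rw [hBx₀] at hwB
    exact connectedComponentIn_subset _ _ hwB
  have hBadΩ : Bad ⊆ Ω := fun w hw => (hBadsub hw).1
  have hhole : ∀ w, ∃ Lw : Set ℂ, w ∈ Bad →
      IsCompact Lw ∧ Lw ⊆ Ω ∧ connectedComponentIn (Ω \ E) w ⊆ Lw := by
    intro w
    by_cases hw : w ∈ Bad
    · obtain ⟨B, hB, hwB⟩ := hw
      obtain ⟨⟨x₀, hx₀E, hBx₀⟩, Lc, hLc, hLcΩ, hBL⟩ := hB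
      refine ⟨Lc, fun _ => ⟨hLc, hLcΩ, ?_⟩⟩
      have heq : connectedComponentIn (Ω \ E) x₀ = connectedComponentIn (Ω \ E) w :=
        connectedComponentIn_eq (by rw [← hBx₀]; exact hwB)
      rw [← heq, ← hBx₀]
      exact hBL
    · exact ⟨∅, fun hw' => absurd hw' hw⟩
  choose Lz hLz using hhole
  obtain ⟨L₁, hL₁c, hKint, hL₁Ω⟩ := exists_compact_between hK hΩ hKΩ
  set O := interior L₁ with hOdef
  have hclOL₁ : closure O ⊆ L₁ := closure_minimal interior_subset hL₁c.isClosed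
  have hOc : IsCompact (closure O) := hL₁c.of_isClosed_subset isClosed_closure hclOL₁
  have hOΩ : closure O ⊆ Ω := hclOL₁.trans hL₁Ω
  have hcon' : ∀ M : Set ℂ, IsCompact M → M ⊆ Ω → ∃ w ∈ Bad, w ∉ M := fun M hM hMΩ =>
    Set.not_subset.1 (hcon M hM hMΩ)
  obtain ⟨x, hxBad, hxC₀, hxLz, hxfin⟩ := exists_escape_seq hΩ hBadΩ hcon' hOc hOΩ Lz
    (fun w hw => ⟨(hLz w hw).1, (hLz w hw).2.1⟩)
  set T := Set.range x with hTdef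
  have hUopen : IsOpen (Ω \ T) := by
    rw [isOpen_iff_forall_mem_open]
    intro p hp
    obtain ⟨N, hNc, hpN, hNΩ⟩ := exists_compact_between isCompact_singleton hΩ
      (by simpa using hp.1)
    have hfin : {n | x n ∈ N}.Finite := hxfin N hNc hNΩ
    refine ⟨interior N \ (x '' {n | x n ∈ N} \ {p}), ?_, ?_, ?_⟩
    · rintro q ⟨hqint, hqnot⟩
      refine ⟨hNΩ (interior_subset hqint), ?_⟩
      rintro ⟨n, rfl⟩
      exact hp.2 (by
        have hmem : x n ∈ x '' {n | x n ∈ N} := ⟨n, show x n ∈ N from interior_subset hqint, rfl⟩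
        have : x n = p := by
          by_contra hne
          exact hqnot ⟨hmem, hne⟩
        rw [← this]
        exact ⟨n, rfl⟩)
    · exact isOpen_interior.sdiff (((hfin.image x).diff (t := {p})).isClosed)
    · exact ⟨hpN rfl, fun hmem => hmem.2 rfl⟩
  have hFU : F ⊆ Ω \ T := by
    intro w hw
    refine ⟨hFΩ hw, ?_⟩
    rintro ⟨n, rfl⟩
    exact (hBadsub (hxBad n)).2 (Or.inr hw)
  obtain ⟨V, hVopen, hVΩ, hFV, hVU, hVconn⟩ := h (Ω \ T) hUopen hFU Set.diff_subset
  have hxV : ∀ n, x n ∉ V := fun n hmem => (hVU hmem).2 ⟨n, rfl⟩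
  have hEVO : E ⊆ V ∪ O := by
    rintro w (hwK | hwF)
    · exact Or.inr (hKint hwK)
    · exact Or.inl (hFV hwF)
  have hring : ∀ n, ∃ c, c ∈ connectedComponentIn (Ω \ E) (x n) ∧
      c ∈ closure O \ O ∧ c ∉ V := fun n =>
    hole_meets_ring hΩ hVopen hVconn isOpen_interior hOc hOΩ hEVO
      (hLz _ (hxBad n)).1 (hLz _ (hxBad n)).2.1 (hBadΩ (hxBad n)) (hxV n) (hxC₀ n)
      (hLz _ (hxBad n)).2.2 (hBadsub (hxBad n))
  choose c hcC hcring hcV using hring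
  obtain ⟨y, hyclO, φ, hφ, hty⟩ := hOc.tendsto_subseq (fun n => (hcring n).1)
  have hyV : y ∉ V :=
    hVopen.isClosed_compl.mem_of_tendsto hty (Filter.Eventually.of_forall fun n => hcV (φ n))
  have hyO : y ∉ O :=
    isOpen_interior.isClosed_compl.mem_of_tendsto hty
      (Filter.Eventually.of_forall fun n => (hcring (φ n)).2)
  have hyΩ : y ∈ Ω := hOΩ hyclO
  have hyE : y ∉ E := fun hyE => (hEVO hyE).elim hyV hyO
  obtain ⟨ε, hε, hball⟩ := Metric.isOpen_iff.1 hE y ⟨hyΩ, hyE⟩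
  obtain ⟨N, hN⟩ := Filter.eventually_atTop.1 (hty.eventually (Metric.ball_mem_nhds y hε))
  have h1 : Metric.ball y ε ⊆ connectedComponentIn (Ω \ E) (c (φ N)) :=
    ((convex_ball y ε).isPreconnected).subset_connectedComponentIn (hN N le_rfl) hball
  have h2 : c (φ (N+1)) ∈ connectedComponentIn (Ω \ E) (c (φ N)) :=
    h1 (hN (N+1) (Nat.le_succ N))
  have e1 : connectedComponentIn (Ω \ E) (x (φ N)) = connectedComponentIn (Ω \ E) (c (φ N)) :=
    connectedComponentIn_eq (hcC (φ N))
  have e2 : connectedComponentIn (Ω \ E) (x (φ (N+1))) =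
      connectedComponentIn (Ω \ E) (c (φ (N+1))) :=
    connectedComponentIn_eq (hcC (φ (N+1)))
  have e3 : connectedComponentIn (Ω \ E) (c (φ N)) =
      connectedComponentIn (Ω \ E) (c (φ (N+1))) :=
    connectedComponentIn_eq h2
  have hmem : x (φ (N+1)) ∈ connectedComponentIn (Ω \ E) (x (φ N)) := by
    rw [e1, e3, ← e2]
    exact mem_connectedComponentIn (hBadsub (hxBad _))
  exact hxLz (φ N) (φ (N+1)) (hφ (Nat.lt_succ_self N)) ((hLz _ (hxBad (φ N))).2.2 hmem)

lemma ocCompl_anti {S T : Set ℂ} (hST : S ⊆ T) : ocCompl Ω T ⊆ ocCompl Ω S :=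
  Set.compl_subset_compl.2 (img_mono hST)

lemma closure_holes {E : Set ℂ} (hE : IsOpen (Ω \ E)) :
    closure (holesUnion Ω E) ∩ Ω ⊆ holesUnion Ω E ∪ E := by
  rintro z ⟨hzcl, hzΩ⟩
  by_cases hzE : z ∈ E
  · exact Or.inr hzE
  left
  obtain ⟨ε, hε, hball⟩ := Metric.isOpen_iff.1 hE z ⟨hzΩ, hzE⟩
  obtain ⟨b, hbball, hbBad⟩ :=
    _root_.mem_closure_iff.1 hzcl _ Metric.isOpen_ball (Metric.mem_ball_self hε)
  obtain ⟨B, hB, hbB⟩ := hbBad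
  obtain ⟨⟨x₀, hx₀, hBx₀⟩, hBck⟩ := hB
  have hbcomp : connectedComponentIn (Ω \ E) x₀ = connectedComponentIn (Ω \ E) b :=
    connectedComponentIn_eq (by rw [← hBx₀]; exact hbB)
  have hballsub : Metric.ball z ε ⊆ connectedComponentIn (Ω \ E) b :=
    (convex_ball z ε).isPreconnected.subset_connectedComponentIn hbball hball
  exact ⟨B, ⟨⟨x₀, hx₀, hBx₀⟩, hBck⟩,
    by rw [hBx₀, hbcomp]; exact hballsub (Metric.mem_ball_self hε)⟩

lemma connected_part (hΩ : IsOpen Ω) {F : Set ℂ} (hFΩ : F ⊆ Ω)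
    (h : ∀ U : Set ℂ, IsOpen U → F ⊆ U → U ⊆ Ω →
      ∃ V : Set ℂ, IsOpen V ∧ V ⊆ Ω ∧ F ⊆ V ∧ V ⊆ U ∧ IsConnected (ocCompl Ω V)) :
    IsConnected (ocCompl Ω F) := by
  choose V hVopen hVΩ hFV hVU hVconn using fun z (hz : z ∈ Ω \ F) =>
    h (Ω \ {z}) (hΩ.sdiff isClosed_singleton)
      (fun w hw => ⟨hFΩ hw, fun hwz => hz.2 (by rwa [← Set.mem_singleton_iff.1 hwz])⟩)
      Set.diff_subset
  set c : Set (Set (OnePoint Ω)) :=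
    insert {OnePoint.infty} {S | ∃ z, ∃ hz : z ∈ Ω \ F, S = ocCompl Ω (V z hz)} with hc
  have hcover : ocCompl Ω F = ⋃₀ c := by
    apply Set.Subset.antisymm
    · intro p hp
      by_cases hr : p ∈ Set.range (OnePoint.some : Ω → OnePoint Ω)
      · obtain ⟨q, rfl⟩ := hr
        have hqF : (q : ℂ) ∉ F := fun hqF => hp (coe_mem_img_iff.2 hqF)
        have hz : (q : ℂ) ∈ Ω \ F := ⟨q.2, hqF⟩
        refine ⟨ocCompl Ω (V _ hz), Set.mem_insert_iff.2 (Or.inr ⟨_, hz, rfl⟩), ?_⟩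
        intro hmem
        exact ((hVU _ hz) (coe_mem_img_iff.1 hmem)).2 rfl
      · refine ⟨{OnePoint.infty}, Set.mem_insert_iff.2 (Or.inl rfl), ?_⟩
        rw [OnePoint.notMem_range_coe_iff.1 hr]
        rfl
    · rintro p ⟨S, hS, hpS⟩
      rcases Set.mem_insert_iff.1 hS with rfl | ⟨z, hz, rfl⟩
      · rw [Set.mem_singleton_iff.1 hpS]
        exact infty_mem_ocCompl F
      · exact ocCompl_anti (hFV z hz) hpS
  rw [hcover]
  refine ⟨⟨OnePoint.infty, ⟨{OnePoint.infty}, Set.mem_insert_iff.2 (Or.inl rfl), rfl⟩⟩,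
    isPreconnected_sUnion OnePoint.infty c ?_ ?_⟩
  · intro S hS
    rcases Set.mem_insert_iff.1 hS with rfl | ⟨z, hz, rfl⟩
    · rfl
    · exact infty_mem_ocCompl _
  · intro S hS
    rcases Set.mem_insert_iff.1 hS with rfl | ⟨z, hz, rfl⟩
    · exact isPreconnected_singleton
    · exact (hVconn z hz).2

lemma locconn_part (hΩ : IsOpen Ω) {F : Set ℂ} (hF : RelClosed Ω F)
    (h : ∀ U : Set ℂ, IsOpen U → F ⊆ U → U ⊆ Ω →
      ∃ V : Set ℂ, IsOpen V ∧ V ⊆ Ω ∧ F ⊆ V ∧ V ⊆ U ∧ IsConnected (ocCompl Ω V)) :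
    LocConnAt (ocCompl Ω F) OnePoint.infty := by
  intro N hN
  haveI : LocallyCompactSpace Ω := hΩ.locallyCompactSpace
  obtain ⟨s, ⟨hscl, hscpt⟩, hsN⟩ := OnePoint.hasBasis_nhds_infty.mem_iff.1 hN
  set K := (Subtype.val '' s : Set ℂ) with hKdef
  have hKc : IsCompact K := hscpt.image continuous_subtype_val
  have hKΩ : K ⊆ Ω := Subtype.coe_image_subset _ _
  set E := K ∪ F with hEdef
  obtain ⟨F₁, hF₁cl, hF₁pre⟩ := isClosed_induced_iff.1 hF.2
  have hFiff : ∀ w, w ∈ Ω → (w ∈ F ↔ w ∈ F₁) := by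
    intro w hw
    constructor
    · intro hwF
      have : (⟨w, hw⟩ : Ω) ∈ (fun x : Ω => (x : ℂ)) ⁻¹' F := hwF
      rw [← hF₁pre] at this
      exact this
    · intro hwF₁
      have : (⟨w, hw⟩ : Ω) ∈ (fun x : Ω => (x : ℂ)) ⁻¹' F₁ := hwF₁
      rw [hF₁pre] at this
      exact this
  have hEopen : IsOpen (Ω \ E) := by
    have heq : Ω \ E = Ω ∩ (K ∪ F₁)ᶜ := by
      ext w
      constructor
      · rintro ⟨hwΩ, hwE⟩
        exact ⟨hwΩ, fun hmem => hwE (hmem.elim Or.inl (fun hw1 => Or.inr ((hFiff w hwΩ).2 hw1)))⟩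
      · rintro ⟨hwΩ, hwKF⟩
        exact ⟨hwΩ, fun hmem => hwKF (hmem.elim Or.inl (fun hwF => Or.inr ((hFiff w hwΩ).1 hwF)))⟩
    rw [heq]
    exact hΩ.inter (hKc.isClosed.union hF₁cl).isOpen_compl
  obtain ⟨L, hLc, hLΩ, hBadL⟩ := bad_bounded hΩ hF.1 h hKc hKΩ hEopen
  set Bad := holesUnion Ω E with hBadDef
  set Khat := closure (K ∪ Bad) with hKhatDef
  have hKhatKL : Khat ⊆ K ∪ L :=
    closure_minimal (Set.union_subset_union subset_rfl hBadL) (hKc.union hLc).isClosed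
  have hKhatc : IsCompact Khat := (hKc.union hLc).of_isClosed_subset isClosed_closure hKhatKL
  have hKhatΩ : Khat ⊆ Ω := hKhatKL.trans (Set.union_subset hKΩ hLΩ)
  have hKhatsub : Khat ⊆ K ∪ Bad ∪ F := by
    intro w hw
    have hwΩ : w ∈ Ω := hKhatΩ hw
    rw [hKhatDef, closure_union] at hw
    rcases hw with hwK | hwB
    · exact Or.inl (Or.inl (hKc.isClosed.closure_eq ▸ hwK))
    · rcases closure_holes hEopen ⟨hwB, hwΩ⟩ with hwBad | hwE
      · exact Or.inl (Or.inr hwBad)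
      · rcases hwE with hwK | hwF
        · exact Or.inl (Or.inl hwK)
        · exact Or.inr hwF
  have hKKhat : K ⊆ Khat := (Set.subset_union_left).trans subset_closure
  have hBadKhat : Bad ⊆ Khat := (Set.subset_union_right).trans subset_closure
  refine ⟨(img Ω Khat)ᶜ,
    ((isClosed_img hKhatc hKhatΩ).isOpen_compl).mem_nhds (infty_not_mem_img _), ?_, ?_⟩
  · intro p hp
    by_cases hr : p ∈ Set.range (OnePoint.some : Ω → OnePoint Ω)
    · obtain ⟨q, rfl⟩ := hr
      have hq : (q : ℂ) ∉ Khat := fun hmem => hp (coe_mem_img_iff.2 hmem)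
      have hqs : q ∉ s := fun hqs => hq (hKKhat ⟨q, hqs, rfl⟩)
      exact hsN (Or.inl ⟨q, hqs, rfl⟩)
    · rw [OnePoint.notMem_range_coe_iff.1 hr]
      exact hsN (Or.inr rfl)
  · have hWE : (img Ω Khat)ᶜ ∩ ocCompl Ω F = ocCompl Ω (Khat ∪ F) := by
      rw [ocCompl_eq_compl_img, ocCompl_eq_compl_img, ← Set.compl_union, img_union]
    rw [hWE]
    -- key facts about components of points outside `Khat ∪ F`
    have hcomp : ∀ z, z ∈ Ω \ (Khat ∪ F) →
        z ∈ Ω \ E ∧ connectedComponentIn (Ω \ E) z ∩ (Khat ∪ F) = ∅ ∧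
          ∀ M : Set ℂ, IsCompact M → M ⊆ Ω → ¬ connectedComponentIn (Ω \ E) z ⊆ M := by
      intro z hz
      have hzE : z ∈ Ω \ E := ⟨hz.1, fun hmem =>
        hz.2 (hmem.elim (fun hK => Or.inl (hKKhat hK)) Or.inr)⟩
      have hznotBad : z ∉ Bad := fun hmem => hz.2 (Or.inl (hBadKhat hmem))
      have hnotbad : ∀ M : Set ℂ, IsCompact M → M ⊆ Ω →
          ¬ connectedComponentIn (Ω \ E) z ⊆ M := by
        intro M hM hMΩ hsub
        exact hznotBad ⟨connectedComponentIn (Ω \ E) z,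
          ⟨⟨z, hzE, rfl⟩, M, hM, hMΩ, hsub⟩, mem_connectedComponentIn hzE⟩
      refine ⟨hzE, ?_, hnotbad⟩
      rw [Set.eq_empty_iff_forall_notMem]
      rintro w ⟨hwC, hwKF⟩
      have hwE : w ∈ Ω \ E := connectedComponentIn_subset _ _ hwC
      have hwBad : w ∉ Bad := by
        intro hwBad
        obtain ⟨B, hB, hwB⟩ := hwBad
        obtain ⟨⟨x₀, hx₀, hBx₀⟩, hBck⟩ := hB
        have e1 : connectedComponentIn (Ω \ E) x₀ = connectedComponentIn (Ω \ E) w :=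
          connectedComponentIn_eq (by rw [← hBx₀]; exact hwB)
        have e2 : connectedComponentIn (Ω \ E) z = connectedComponentIn (Ω \ E) w :=
          connectedComponentIn_eq hwC
        exact hznotBad ⟨B, ⟨⟨x₀, hx₀, hBx₀⟩, hBck⟩,
          by rw [hBx₀, e1, ← e2]; exact mem_connectedComponentIn hzE⟩
      rcases hwKF with hwKhat | hwF
      · rcases hKhatsub hwKhat with (hwK | hwB) | hwF
        · exact hwE.2 (Or.inl hwK)
        · exact hwBad hwB
        · exact hwE.2 (Or.inr hwF)
      · exact hwE.2 (Or.inr hwF)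
    set c : Set (Set (OnePoint Ω)) :=
      insert {OnePoint.infty}
        {S | ∃ z, ∃ _ : z ∈ Ω \ (Khat ∪ F),
          S = insert OnePoint.infty (img Ω (connectedComponentIn (Ω \ E) z))} with hc
    have hSzsub : ∀ z (hz : z ∈ Ω \ (Khat ∪ F)),
        insert OnePoint.infty (img Ω (connectedComponentIn (Ω \ E) z)) ⊆
          ocCompl Ω (Khat ∪ F) := by
      intro z hz p hp
      rcases Set.mem_insert_iff.1 hp with rfl | hp
      · exact infty_mem_ocCompl _
      · obtain ⟨q, hq, rfl⟩ := hp
        intro hmem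
        have hqKF : (q : ℂ) ∈ Khat ∪ F := coe_mem_img_iff.1 hmem
        exact Set.eq_empty_iff_forall_notMem.1 (hcomp z hz).2.1 _ ⟨hq, hqKF⟩
    have hcover : ocCompl Ω (Khat ∪ F) = ⋃₀ c := by
      apply Set.Subset.antisymm
      · intro p hp
        by_cases hr : p ∈ Set.range (OnePoint.some : Ω → OnePoint Ω)
        · obtain ⟨q, rfl⟩ := hr
          have hq : (q : ℂ) ∉ Khat ∪ F := fun hmem => hp (coe_mem_img_iff.2 hmem)
          have hz : (q : ℂ) ∈ Ω \ (Khat ∪ F) := ⟨q.2, hq⟩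
          exact ⟨_, Set.mem_insert_iff.2 (Or.inr ⟨_, hz, rfl⟩),
            Set.mem_insert_iff.2 (Or.inr (coe_mem_img_iff.2
              (mem_connectedComponentIn (hcomp _ hz).1)))⟩
        · refine ⟨{OnePoint.infty}, Set.mem_insert_iff.2 (Or.inl rfl), ?_⟩
          rw [OnePoint.notMem_range_coe_iff.1 hr]
          rfl
      · rintro p ⟨S, hS, hpS⟩
        rcases Set.mem_insert_iff.1 hS with rfl | ⟨z, hz, rfl⟩
        · rw [Set.mem_singleton_iff.1 hpS]
          exact infty_mem_ocCompl _
        · exact hSzsub z hz hpS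
    rw [hcover]
    refine ⟨⟨OnePoint.infty, ⟨{OnePoint.infty}, Set.mem_insert_iff.2 (Or.inl rfl), rfl⟩⟩,
      isPreconnected_sUnion OnePoint.infty c ?_ ?_⟩
    · intro S hS
      rcases Set.mem_insert_iff.1 hS with rfl | ⟨z, hz, rfl⟩
      · rfl
      · exact Set.mem_insert _ _
    · intro S hS
      rcases Set.mem_insert_iff.1 hS with rfl | ⟨z, hz, rfl⟩
      · exact isPreconnected_singleton
      · have hCzΩ : connectedComponentIn (Ω \ E) z ⊆ Ω :=
          (connectedComponentIn_subset _ _).trans Set.diff_subset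
        have h9 : IsPreconnected (img Ω (connectedComponentIn (Ω \ E) z)) :=
          isPreconnected_img isPreconnected_connectedComponentIn hCzΩ
        have hcl : OnePoint.infty ∈ closure (img Ω (connectedComponentIn (Ω \ E) z)) :=
          infty_mem_closure_img hCzΩ (hcomp z hz).2.2
        exact h9.subset_closure (Set.subset_insert _ _)
          (Set.insert_subset hcl subset_closure)

end Arakelian5

theorem stmt5 (Ω F : Set ℂ) (hΩ : IsOpen Ω) (hF : RelClosed Ω F)
    (h : ∀ U : Set ℂ, IsOpen U → F ⊆ U → U ⊆ Ω →
      ∃ V : Set ℂ, IsOpen V ∧ V ⊆ Ω ∧ F ⊆ V ∧ V ⊆ U ∧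
        IsConnected (ocCompl Ω V)) :
    ArakelianIn Ω F :=
  ⟨hF, Arakelian5.connected_part hΩ hF.1 h, Arakelian5.locconn_part hΩ hF h⟩
end
end
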